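/- arXiv:2402.05221 — 3 statements merged into one kernel-verified Lean document; each statement's English description precedes it below -/
import Mathlib

section
/- Let n ≥ 1 and 1 ≤ k ≤ n. For every partition λ of n and every pair (T,S) ∈ SYT(λ) × SYT(λ), the polynomial F_T^S does not lie in the ideal 𝓘_k; i.e., F_T^S is nonzero in P_n^{(k)} = ℂ[𝐱,𝐲]/𝓘_k. In fact, no monomial occurring in F_T^S with nonzero coefficient lies in 𝓘_k. -/
open MvPolynomial

noncomputable section

/-- The polynomial ring `ℂ[x₁,…,xₙ,y₁,…,yₙ]`; variable `Sum.inl i` is `xᵢ`,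
variable `Sum.inr i` is `yᵢ`. -/
abbrev PolyXY (n : ℕ) : Type := MvPolynomial (Fin n ⊕ Fin n) ℂ

/-- The diagonal action of `π ∈ Sₙ`: `π · f = f(x_{π(1)},…,x_{π(n)},y_{π(1)},…,y_{π(n)})`. -/
def diagAct {n : ℕ} (π : Equiv.Perm (Fin n)) (f : PolyXY n) : PolyXY n :=
  rename (Sum.map ⇑π ⇑π) f
/-- The cells of a Young diagram (French notation: a cell `(r, c)` lies in row `r`
counted from the bottom starting at `0`, and column `c` starting at `0`). -/
abbrev Cell (lam : YoungDiagram) : Type := {x // x ∈ lam.cells}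

/-- A bijective filling of the cells of `lam` with the `n` values (value `j : Fin n`
represents the entry `j+1`). -/
abbrev Tab (lam : YoungDiagram) (n : ℕ) : Type := Cell lam ≃ Fin n

def cellRow {lam : YoungDiagram} (b : Cell lam) : ℕ := b.1.1

def cellCol {lam : YoungDiagram} (b : Cell lam) : ℕ := b.1.2

/-- A filling is standard if entries increase left to right along rows and increase
up columns. -/
def IsSYT {lam : YoungDiagram} {n : ℕ} (T : Tab lam n) : Prop :=
  (∀ a b : Cell lam, cellRow a = cellRow b → cellCol a < cellCol b → T a < T b) ∧
  (∀ a b : Cell lam, cellCol a = cellCol b → cellRow a < cellRow b → T a < T b)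

/-- The row group `R(T)`: permutations sending each entry of `T` to an entry in the
same row. -/
def rowGroup {lam : YoungDiagram} {n : ℕ} (T : Tab lam n) : Finset (Equiv.Perm (Fin n)) :=
  Finset.univ.filter fun π => ∀ b : Cell lam, cellRow (T.symm (π (T b))) = cellRow b

/-- The column group `C(T)`: permutations sending each entry of `T` to an entry in the
same column. -/
def colGroup {lam : YoungDiagram} {n : ℕ} (T : Tab lam n) : Finset (Equiv.Perm (Fin n)) :=
  Finset.univ.filter fun π => ∀ b : Cell lam, cellCol (T.symm (π (T b))) = cellCol b

/-- The monomial `x_T^c y_T^d = ∏_{b ∈ λ} x_{T(b)}^{c(b)} y_{T(b)}^{d(b)}`. -/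
def tabMonomial {lam : YoungDiagram} {n : ℕ} (T : Tab lam n) (c d : Cell lam → ℕ) :
    PolyXY n :=
  ∏ b : Cell lam, (X (Sum.inl (T b)) ^ c b * X (Sum.inr (T b)) ^ d b)

/-- The higher Specht polynomial `F_T^{c,d} = ε_T(x_T^c y_T^d)`, where
`ε_T = Σ_{τ∈C(T)} Σ_{σ∈R(T)} sgn(τ)·τσ`. -/
def FTcd {lam : YoungDiagram} {n : ℕ} (T : Tab lam n) (c d : Cell lam → ℕ) : PolyXY n :=
  ∑ τ ∈ colGroup T, ∑ σ ∈ rowGroup T,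
    ((Equiv.Perm.sign τ : ℤ) : ℂ) • diagAct (τ * σ) (tabMonomial T c d)
/-- The row (from the bottom, `0`-indexed) containing the `1`-indexed entry `j` of `S`. -/
def rowOfVal {lam : YoungDiagram} {n : ℕ} (S : Tab lam n) (j : ℕ) : ℕ :=
  if h : j - 1 < n then cellRow (S.symm ⟨j - 1, h⟩) else 0

/-- The descent set of `S` (1-indexed): those `d ∈ {1,…,n−1}` such that `d+1` lies in a
strictly higher row of `S` than `d`. -/
def DesSet {lam : YoungDiagram} {n : ℕ} (S : Tab lam n) : Finset ℕ :=
  (Finset.Icc 1 (n - 1)).filter fun d => rowOfVal S d < rowOfVal S (d + 1)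

/-- The `μ`-cocharge tableau for the hook `μ = (n−k+1,1^{k−1})`: its value on the cell of
`S` containing (1-indexed) `j` is `#{d ∈ Des(S) : n−k+1 ≤ d ≤ j−1}`.  Here the cell `b`
contains the 1-indexed entry `(S b : ℕ) + 1`. -/
def ccTabMu {lam : YoungDiagram} {n : ℕ} (k : ℕ) (S : Tab lam n) (b : Cell lam) : ℕ :=
  ((DesSet S).filter fun d => n - k + 1 ≤ d ∧ d ≤ (S b : ℕ)).card

/-- The reverse `μ`-cocharge tableau: its value on the cell of `S` containing `j` is
`#{d ∈ Des(S) : j ≤ d ≤ n−k}`. -/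
def ccTabMu' {lam : YoungDiagram} {n : ℕ} (k : ℕ) (S : Tab lam n) (b : Cell lam) : ℕ :=
  ((DesSet S).filter fun d => (S b : ℕ) + 1 ≤ d ∧ d ≤ n - k).card

/-- The higher Specht polynomial `F_T^S = ε_T(xy_T^S)` for the hook `μ = (n−k+1,1^{k−1})`. -/
def FTS {lam : YoungDiagram} {n : ℕ} (k : ℕ) (T S : Tab lam n) : PolyXY n :=
  FTcd T (ccTabMu k S) (ccTabMu' k S)
/-- The ideal `𝓘_k`, generated by all products of `k` distinct `x`-variables, all products
of `n−k+1` distinct `y`-variables, and the products `x_i y_i`. -/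
def Ik (n k : ℕ) : Ideal (PolyXY n) :=
  Ideal.span
    ({p : PolyXY n | ∃ A : Finset (Fin n), A.card = k ∧ p = ∏ i ∈ A, X (Sum.inl i)} ∪
     {p : PolyXY n | ∃ B : Finset (Fin n), B.card = n - k + 1 ∧ p = ∏ j ∈ B, X (Sum.inr j)} ∪
     {p : PolyXY n | ∃ i : Fin n, p = X (Sum.inl i) * X (Sum.inr i)})

/-- `e_d^{(k)}`: the elementary symmetric polynomial `e_d` in the `x`-variables if
`d ≤ k−1`, and `e_{n−d}` in the `y`-variables if `d ≥ k`. -/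
def edk (n k d : ℕ) : PolyXY n :=
  if d ≤ k - 1 then rename Sum.inl (esymm (Fin n) ℂ d)
  else rename Sum.inr (esymm (Fin n) ℂ (n - d))

/-- `e_ν^{(k)} = ∏_i e_{ν_i}^{(k)}` for a partition `ν` given by its multiset of parts. -/
def enuk (n k : ℕ) (nu : Multiset ℕ) : PolyXY n := (nu.map (edk n k)).prod

/-! ### Auxiliary lemmas -/

section Aux

open Finsupp

lemma prod_monomial_one {n : ℕ} {ι : Type*} (s : Finset ι) (f : ι → ((Fin n ⊕ Fin n) →₀ ℕ)) :
    ∏ i ∈ s, (monomial (f i) (1 : ℂ) : PolyXY n) = monomial (∑ i ∈ s, f i) 1 := by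
  classical
  induction s using Finset.induction_on with
  | empty => simp
  | insert a s hnotmem ih =>
      rw [Finset.prod_insert hnotmem, Finset.sum_insert hnotmem, ih, monomial_mul, one_mul]

/-- Exponent finsupp of `tabMonomial`. -/
def expE {lam : YoungDiagram} {n : ℕ} (T : Tab lam n) (c d : Cell lam → ℕ) :
    (Fin n ⊕ Fin n) →₀ ℕ :=
  ∑ b : Cell lam, (Finsupp.single (Sum.inl (T b)) (c b) + Finsupp.single (Sum.inr (T b)) (d b))

lemma tabMonomial_eq {lam : YoungDiagram} {n : ℕ} (T : Tab lam n) (c d : Cell lam → ℕ) :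
    tabMonomial T c d = monomial (expE T c d) 1 := by
  classical
  rw [tabMonomial, expE, ← prod_monomial_one]
  refine Finset.prod_congr rfl fun b _ => ?_
  rw [X_pow_eq_monomial, X_pow_eq_monomial, monomial_mul, one_mul]

lemma expE_inl {lam : YoungDiagram} {n : ℕ} (T : Tab lam n) (c d : Cell lam → ℕ) (i : Fin n) :
    expE T c d (Sum.inl i) = c (T.symm i) := by
  classical
  rw [expE, Finsupp.finset_sum_apply]
  have : ∀ b : Cell lam,
      ((Finsupp.single (Sum.inl (T b)) (c b) + Finsupp.single (Sum.inr (T b)) (d b) :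
        (Fin n ⊕ Fin n) →₀ ℕ)) (Sum.inl i) = if b = T.symm i then c b else 0 := by
    intro b
    rw [Finsupp.add_apply, Finsupp.single_apply, Finsupp.single_apply]
    simp [Equiv.apply_eq_iff_eq_symm_apply]
  rw [Finset.sum_congr rfl fun b _ => this b, Finset.sum_ite_eq' Finset.univ (T.symm i) c]
  simp

lemma expE_inr {lam : YoungDiagram} {n : ℕ} (T : Tab lam n) (c d : Cell lam → ℕ) (i : Fin n) :
    expE T c d (Sum.inr i) = d (T.symm i) := by
  classical
  rw [expE, Finsupp.finset_sum_apply]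
  have : ∀ b : Cell lam,
      ((Finsupp.single (Sum.inl (T b)) (c b) + Finsupp.single (Sum.inr (T b)) (d b) :
        (Fin n ⊕ Fin n) →₀ ℕ)) (Sum.inr i) = if b = T.symm i then d b else 0 := by
    intro b
    rw [Finsupp.add_apply, Finsupp.single_apply, Finsupp.single_apply]
    simp [Equiv.apply_eq_iff_eq_symm_apply]
  rw [Finset.sum_congr rfl fun b _ => this b, Finset.sum_ite_eq' Finset.univ (T.symm i) d]
  simp

lemma mapDomain_sumMap_apply_inl {n : ℕ} (π : Equiv.Perm (Fin n))
    (E : (Fin n ⊕ Fin n) →₀ ℕ) (i : Fin n) :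
    Finsupp.mapDomain (Sum.map ⇑π ⇑π) E (Sum.inl i) = E (Sum.inl (π.symm i)) := by
  have h : Sum.map ⇑π ⇑π = ⇑(Equiv.sumCongr π π) := rfl
  rw [h, Finsupp.mapDomain_equiv_apply]
  rfl

lemma mapDomain_sumMap_apply_inr {n : ℕ} (π : Equiv.Perm (Fin n))
    (E : (Fin n ⊕ Fin n) →₀ ℕ) (i : Fin n) :
    Finsupp.mapDomain (Sum.map ⇑π ⇑π) E (Sum.inr i) = E (Sum.inr (π.symm i)) := by
  have h : Sum.map ⇑π ⇑π = ⇑(Equiv.sumCongr π π) := rfl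
  rw [h, Finsupp.mapDomain_equiv_apply]
  rfl

end Aux

section Aux2

variable {lam : YoungDiagram} {n : ℕ}

lemma ccTabMu_pos {k : ℕ} {S : Tab lam n} {b : Cell lam} (h : ccTabMu k S b ≠ 0) :
    n - k + 1 ≤ (S b : ℕ) := by
  obtain ⟨d1, hd1⟩ := Finset.card_ne_zero.mp h
  rw [Finset.mem_filter] at hd1
  omega

lemma ccTabMu'_pos {k : ℕ} {S : Tab lam n} {b : Cell lam} (h : ccTabMu' k S b ≠ 0) :
    (S b : ℕ) + 1 ≤ n - k := by
  obtain ⟨d2, hd2⟩ := Finset.card_ne_zero.mp h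
  rw [Finset.mem_filter] at hd2
  omega

lemma not_both_pos {k : ℕ} {S : Tab lam n} (b : Cell lam) :
    ccTabMu k S b = 0 ∨ ccTabMu' k S b = 0 := by
  by_contra h
  push_neg at h
  have h1 := ccTabMu_pos h.1
  have h2 := ccTabMu'_pos h.2
  omega

lemma rowOfVal_eq {S : Tab lam n} (u : Cell lam) : rowOfVal S ((S u : ℕ) + 1) = cellRow u := by
  have hlt : (S u : ℕ) + 1 - 1 < n := by
    have := (S u).isLt; omega
  rw [rowOfVal, dif_pos hlt]
  congr 1
  have : (⟨(S u : ℕ) + 1 - 1, hlt⟩ : Fin n) = S u := by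
    apply Fin.ext; simp
  rw [this, Equiv.symm_apply_apply]

lemma exists_descent_between {S : Tab lam n} (hS : IsSYT S) {u v : Cell lam}
    (hcol : cellCol u = cellCol v) (hrow : cellRow u < cellRow v) :
    ∃ d0 ∈ DesSet S, (S u : ℕ) + 1 ≤ d0 ∧ d0 ≤ (S v : ℕ) := by
  have hSuv : S u < S v := hS.2 u v hcol hrow
  set a := (S u : ℕ) with ha
  set a' := (S v : ℕ) with ha'
  have haa' : a < a' := hSuv
  have ha'n : a' < n := (S v).isLt
  by_contra hcon
  push_neg at hcon
  have walk : ∀ m : ℕ, a + m ≤ a' → rowOfVal S (a + 1 + m) ≤ rowOfVal S (a + 1) := by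
    intro m
    induction m with
    | zero => intro _; simp
    | succ m ih =>
        intro hm
        have h1 : rowOfVal S (a + 1 + m) ≤ rowOfVal S (a + 1) := ih (by omega)
        have hd : (a + 1 + m) ∉ DesSet S := by
          intro hmem
          have := hcon _ hmem (by omega)
          omega
        have hstep : rowOfVal S (a + 1 + m + 1) ≤ rowOfVal S (a + 1 + m) := by
          by_contra hh
          push_neg at hh
          apply hd
          rw [DesSet, Finset.mem_filter]
          exact ⟨Finset.mem_Icc.mpr ⟨by omega, by omega⟩, hh⟩
        have : a + 1 + (m + 1) = a + 1 + m + 1 := by omega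
        rw [this]
        omega
  have final := walk (a' - a) (by omega)
  have e1 : a + 1 + (a' - a) = a' + 1 := by omega
  rw [e1] at final
  rw [rowOfVal_eq u, rowOfVal_eq v] at final
  omega

/-- The statistic `θ(b) = c(b) − d(b)`. -/
def thetaS (k : ℕ) (S : Tab lam n) (b : Cell lam) : ℤ :=
  (ccTabMu k S b : ℤ) - (ccTabMu' k S b : ℤ)

lemma theta_strict {k : ℕ} {S : Tab lam n} (hS : IsSYT S) {u v : Cell lam}
    (hcol : cellCol u = cellCol v) (hrow : cellRow u < cellRow v) :
    thetaS k S u < thetaS k S v := by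
  obtain ⟨d0, hd0, hd0a, hd0b⟩ := exists_descent_between hS hcol hrow
  have haa' : (S u : ℕ) < (S v : ℕ) := by omega
  have hsubC : (DesSet S).filter (fun d => n - k + 1 ≤ d ∧ d ≤ (S u : ℕ)) ⊆
      (DesSet S).filter (fun d => n - k + 1 ≤ d ∧ d ≤ (S v : ℕ)) := by
    intro x hx
    rw [Finset.mem_filter] at hx ⊢
    exact ⟨hx.1, hx.2.1, by omega⟩
  have hsubD : (DesSet S).filter (fun d => (S v : ℕ) + 1 ≤ d ∧ d ≤ n - k) ⊆
      (DesSet S).filter (fun d => (S u : ℕ) + 1 ≤ d ∧ d ≤ n - k) := by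
    intro x hx
    rw [Finset.mem_filter] at hx ⊢
    exact ⟨hx.1, by omega, hx.2.2⟩
  rcases le_or_gt d0 (n - k) with hcase | hcase
  · have hmem : d0 ∈ (DesSet S).filter (fun d => (S u : ℕ) + 1 ≤ d ∧ d ≤ n - k) :=
      Finset.mem_filter.mpr ⟨hd0, hd0a, hcase⟩
    have hnot : d0 ∉ (DesSet S).filter (fun d => (S v : ℕ) + 1 ≤ d ∧ d ≤ n - k) := by
      rw [Finset.mem_filter]; push_neg; intro _ h; omega
    have h1 := Finset.card_lt_card ((Finset.ssubset_iff_of_subset hsubD).mpr ⟨d0, hmem, hnot⟩)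
    have h2 := Finset.card_le_card hsubC
    rw [thetaS, thetaS, ccTabMu, ccTabMu, ccTabMu', ccTabMu']
    omega
  · have hmem : d0 ∈ (DesSet S).filter (fun d => n - k + 1 ≤ d ∧ d ≤ (S v : ℕ)) :=
      Finset.mem_filter.mpr ⟨hd0, by omega, hd0b⟩
    have hnot : d0 ∉ (DesSet S).filter (fun d => n - k + 1 ≤ d ∧ d ≤ (S u : ℕ)) := by
      rw [Finset.mem_filter]; push_neg; intro _ h; omega
    have h1 := Finset.card_lt_card ((Finset.ssubset_iff_of_subset hsubC).mpr ⟨d0, hmem, hnot⟩)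
    have h2 := Finset.card_le_card hsubD
    rw [thetaS, thetaS, ccTabMu, ccTabMu, ccTabMu', ccTabMu']
    omega

lemma cellRow_lt (hlam : lam.card = n) (b : Cell lam) : cellRow b < n := by
  classical
  have hsub : (Finset.range (cellRow b + 1)).image (fun r => (r, cellCol b)) ⊆ lam.cells := by
    intro x hx
    rw [Finset.mem_image] at hx
    obtain ⟨r, hr, rfl⟩ := hx
    rw [Finset.mem_range] at hr
    rw [YoungDiagram.mem_cells]
    have hr' : r ≤ b.1.1 := by simpa [cellRow] using Nat.lt_succ_iff.mp hr
    exact lam.up_left_mem hr' (le_refl _) ((lam.mem_cells _).mp b.2)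
  have hinj : Function.Injective (fun r : ℕ => (r, cellCol b)) := by
    intro x y h; simpa using h
  have hcard := Finset.card_le_card hsub
  rw [Finset.card_image_of_injective _ hinj, Finset.card_range] at hcard
  rw [← hlam]
  exact hcard

section Aux3

variable {lam : YoungDiagram} {n : ℕ}

lemma fix_of_theta (θ : Cell lam → ℤ)
    (hθ : ∀ u v : Cell lam, cellCol u = cellCol v → cellRow u < cellRow v → θ u < θ v)
    (tb sb : Cell lam → Cell lam)
    (htb_inj : Function.Injective tb) (hsb_inj : Function.Injective sb)
    (htb_col : ∀ u, cellCol (tb u) = cellCol u) (hsb_row : ∀ u, cellRow (sb u) = cellRow u)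
    (hcond : ∀ b, θ (tb (sb b)) = θ b)
    (hrow : ∀ b : Cell lam, cellRow b < n) :
    ∀ b, tb b = b := by
  classical
  have key : ∀ r : ℕ, (∀ u, r < cellRow u → tb u = u) → ∀ u, cellRow u = r → tb u = u := by
    intro r hfix
    set s : Finset (Cell lam) := Finset.univ.filter (fun b => cellRow b = r) with hs
    have hmem_s : ∀ b : Cell lam, b ∈ s ↔ cellRow b = r := by
      intro b; simp [hs]
    -- the image of s under sb is s
    have himgsub : s.image sb ⊆ s := by
      intro x hx
      rw [Finset.mem_image] at hx
      obtain ⟨b, hb, rfl⟩ := hx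
      rw [hmem_s] at hb ⊢
      rw [hsb_row]; exact hb
    have himg : s.image sb = s :=
      Finset.eq_of_subset_of_card_le himgsub
        (le_of_eq (Finset.card_image_of_injective s hsb_inj).symm)
    -- if tb moves a cell of row r, theta strictly drops
    have hrowle : ∀ c, cellRow c = r → cellRow (tb c) ≤ r := by
      intro c hc
      by_contra h
      push_neg at h
      have h2 := hfix (tb c) h
      have h3 : tb c = c := htb_inj h2
      rw [h3] at h
      omega
    have hcell_eq : ∀ c, cellRow (tb c) = cellRow c → tb c = c := by
      intro c hc
      apply Subtype.ext
      have h1 : (tb c).1.1 = c.1.1 := hc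
      have h2 : (tb c).1.2 = c.1.2 := htb_col c
      exact Prod.ext h1 h2
    have hlt : ∀ c, cellRow c = r → tb c ≠ c → θ (tb c) < θ c := by
      intro c hc hne
      have h1 : cellRow (tb c) ≤ r := hrowle c hc
      have h2 : cellRow (tb c) ≠ cellRow c := fun h => hne (hcell_eq c h)
      exact hθ (tb c) c (htb_col c) (by omega)
    have hle : ∀ c ∈ s, θ (tb c) ≤ θ c := by
      intro c hc
      by_cases hne : tb c = c
      · rw [hne]
      · exact le_of_lt (hlt c ((hmem_s c).mp hc) hne)
    have hsum : ∑ c ∈ s, θ (tb c) = ∑ c ∈ s, θ c := by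
      have e1 : ∑ c ∈ s, θ (tb c) = ∑ b ∈ s, θ (tb (sb b)) := by
        conv_lhs => rw [← himg]
        exact Finset.sum_image (fun x _ y _ h => hsb_inj h)
      rw [e1]
      exact Finset.sum_congr rfl fun b _ => hcond b
    have hall := (Finset.sum_eq_sum_iff_of_le hle).mp hsum
    intro u hu
    by_contra hne
    have := hlt u hu hne
    have h2 := hall u ((hmem_s u).mpr hu)
    omega
  have main : ∀ j : ℕ, ∀ b : Cell lam, n ≤ cellRow b + j → tb b = b := by
    intro j
    induction j with
    | zero => intro b hb; exact absurd (hrow b) (by omega)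
    | succ j ih =>
        intro b hb
        by_cases h : n ≤ cellRow b + j
        · exact ih b h
        · exact key (cellRow b) (fun u hu => ih u (by omega)) b rfl
  intro b
  exact main n b (by omega)

end Aux3

section Aux4

/-- The exponent vectors of the generators of `Ik`. -/
def MSet (n k : ℕ) : Set ((Fin n ⊕ Fin n) →₀ ℕ) :=
  {e | ∃ A : Finset (Fin n), A.card = k ∧ e = ∑ i ∈ A, Finsupp.single (Sum.inl i) 1} ∪
  {e | ∃ B : Finset (Fin n), B.card = n - k + 1 ∧ e = ∑ j ∈ B, Finsupp.single (Sum.inr j) 1} ∪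
  {e | ∃ i : Fin n, e = Finsupp.single (Sum.inl i) 1 + Finsupp.single (Sum.inr i) 1}

lemma X_eq_monomial {n : ℕ} (s : Fin n ⊕ Fin n) :
    (X s : PolyXY n) = monomial (Finsupp.single s 1) 1 := by
  rw [← X_pow_eq_monomial, pow_one]

lemma XmulX {n : ℕ} (i : Fin n) :
    (X (Sum.inl i) : PolyXY n) * X (Sum.inr i) =
      monomial (Finsupp.single (Sum.inl i) 1 + Finsupp.single (Sum.inr i) 1) 1 := by
  rw [X_eq_monomial, X_eq_monomial, monomial_mul, one_mul]

lemma prodX_eq {n : ℕ} (A : Finset (Fin n)) (g : Fin n → Fin n ⊕ Fin n) :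
    ∏ i ∈ A, (X (g i) : PolyXY n) = monomial (∑ i ∈ A, Finsupp.single (g i) 1) 1 := by
  rw [← prod_monomial_one]
  refine Finset.prod_congr rfl fun i _ => ?_
  rw [← X_pow_eq_monomial, pow_one]

lemma Ik_eq (n k : ℕ) :
    Ik n k = Ideal.span ((fun s => (monomial s (1 : ℂ) : PolyXY n)) '' MSet n k) := by
  rw [Ik]
  congr 1
  rw [MSet, Set.image_union, Set.image_union]
  congr 1
  · congr 1
    · ext p
      constructor
      · rintro ⟨A, hA, rfl⟩
        exact ⟨_, ⟨A, hA, rfl⟩, (prodX_eq A Sum.inl).symm⟩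
      · rintro ⟨e, ⟨A, hA, rfl⟩, rfl⟩
        exact ⟨A, hA, (prodX_eq A Sum.inl).symm⟩
    · ext p
      constructor
      · rintro ⟨B, hB, rfl⟩
        exact ⟨_, ⟨B, hB, rfl⟩, (prodX_eq B Sum.inr).symm⟩
      · rintro ⟨e, ⟨B, hB, rfl⟩, rfl⟩
        exact ⟨B, hB, (prodX_eq B Sum.inr).symm⟩
  · ext p
    constructor
    · rintro ⟨i, rfl⟩
      exact ⟨_, ⟨i, rfl⟩, (XmulX i).symm⟩
    · rintro ⟨e, ⟨i, rfl⟩, rfl⟩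
      exact ⟨i, (XmulX i).symm⟩

end Aux4

section Aux5

variable {lam : YoungDiagram} {n : ℕ}

lemma sum_single_apply_inl {n : ℕ} (A : Finset (Fin n)) (i : Fin n) (hi : i ∈ A) :
    (∑ j ∈ A, Finsupp.single (Sum.inl j) 1 : (Fin n ⊕ Fin n) →₀ ℕ) (Sum.inl i) = 1 := by
  classical
  rw [Finsupp.finset_sum_apply]
  have : ∀ j : Fin n, (Finsupp.single (Sum.inl j) 1 : (Fin n ⊕ Fin n) →₀ ℕ) (Sum.inl i)
      = if j = i then 1 else 0 := by
    intro j; rw [Finsupp.single_apply]; simp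
  rw [Finset.sum_congr rfl fun j _ => this j, Finset.sum_ite_eq' A i (fun _ => 1), if_pos hi]

lemma sum_single_apply_inr {n : ℕ} (B : Finset (Fin n)) (i : Fin n) (hi : i ∈ B) :
    (∑ j ∈ B, Finsupp.single (Sum.inr j) 1 : (Fin n ⊕ Fin n) →₀ ℕ) (Sum.inr i) = 1 := by
  classical
  rw [Finsupp.finset_sum_apply]
  have : ∀ j : Fin n, (Finsupp.single (Sum.inr j) 1 : (Fin n ⊕ Fin n) →₀ ℕ) (Sum.inr i)
      = if j = i then 1 else 0 := by
    intro j; rw [Finsupp.single_apply]; simp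
  rw [Finset.sum_congr rfl fun j _ => this j, Finset.sum_ite_eq' B i (fun _ => 1), if_pos hi]

lemma noDiv (n k : ℕ) (hk1 : 1 ≤ k) (hkn : k ≤ n) {lam : YoungDiagram}
    (T S : Tab lam n) (π : Equiv.Perm (Fin n)) :
    ∀ si ∈ MSet n k,
      ¬ si ≤ Finsupp.mapDomain (Sum.map ⇑π ⇑π) (expE T (ccTabMu k S) (ccTabMu' k S)) := by
  classical
  set E := expE T (ccTabMu k S) (ccTabMu' k S) with hE
  set m := Finsupp.mapDomain (Sum.map ⇑π ⇑π) E with hm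
  have hminl : ∀ i : Fin n, m (Sum.inl i) = ccTabMu k S (T.symm (π.symm i)) := by
    intro i
    rw [hm, mapDomain_sumMap_apply_inl, hE, expE_inl]
  have hminr : ∀ i : Fin n, m (Sum.inr i) = ccTabMu' k S (T.symm (π.symm i)) := by
    intro i
    rw [hm, mapDomain_sumMap_apply_inr, hE, expE_inr]
  rintro si ((⟨A, hA, rfl⟩ | ⟨B, hB, rfl⟩) | ⟨i, rfl⟩) hle
  · -- x-generator
    have hval : ∀ i ∈ A, n - k + 1 ≤ (S (T.symm (π.symm i)) : ℕ) := by
      intro i hi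
      have h1 := hle (Sum.inl i)
      rw [sum_single_apply_inl A i hi, hminl] at h1
      exact ccTabMu_pos (by omega)
    set f : Fin n → ℕ := fun i => (S (T.symm (π.symm i)) : ℕ) with hf
    have hinj : Function.Injective f := by
      intro a b h
      have : S (T.symm (π.symm a)) = S (T.symm (π.symm b)) := Fin.ext h
      exact π.symm.injective (T.symm.injective (S.injective this))
    have hsub : A.image f ⊆ Finset.Ico (n - k + 1) n := by
      intro x hx
      rw [Finset.mem_image] at hx
      obtain ⟨i, hi, rfl⟩ := hx
      rw [Finset.mem_Ico]
      exact ⟨hval i hi, (S (T.symm (π.symm i))).isLt⟩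
    have hcard := Finset.card_le_card hsub
    rw [Finset.card_image_of_injective _ hinj, Nat.card_Ico, hA] at hcard
    omega
  · -- y-generator
    have hval : ∀ i ∈ B, (S (T.symm (π.symm i)) : ℕ) < n - k := by
      intro i hi
      have h1 := hle (Sum.inr i)
      rw [sum_single_apply_inr B i hi, hminr] at h1
      have := ccTabMu'_pos (b := T.symm (π.symm i)) (S := S) (k := k) (by omega)
      omega
    set f : Fin n → ℕ := fun i => (S (T.symm (π.symm i)) : ℕ) with hf
    have hinj : Function.Injective f := by
      intro a b h
      have : S (T.symm (π.symm a)) = S (T.symm (π.symm b)) := Fin.ext h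
      exact π.symm.injective (T.symm.injective (S.injective this))
    have hsub : B.image f ⊆ Finset.range (n - k) := by
      intro x hx
      rw [Finset.mem_image] at hx
      obtain ⟨i, hi, rfl⟩ := hx
      rw [Finset.mem_range]
      exact hval i hi
    have hcard := Finset.card_le_card hsub
    rw [Finset.card_image_of_injective _ hinj, Finset.card_range, hB] at hcard
    omega
  · -- xy-generator
    have h1 := hle (Sum.inl i)
    have h2 := hle (Sum.inr i)
    have e1 : (Finsupp.single (Sum.inl i) 1 + Finsupp.single (Sum.inr i) 1 :
        (Fin n ⊕ Fin n) →₀ ℕ) (Sum.inl i) = 1 := by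
      rw [Finsupp.add_apply, Finsupp.single_apply, Finsupp.single_apply]; simp
    have e2 : (Finsupp.single (Sum.inl i) 1 + Finsupp.single (Sum.inr i) 1 :
        (Fin n ⊕ Fin n) →₀ ℕ) (Sum.inr i) = 1 := by
      rw [Finsupp.add_apply, Finsupp.single_apply, Finsupp.single_apply]; simp
    rw [e1, hminl] at h1
    rw [e2, hminr] at h2
    have hc := ccTabMu_pos (b := T.symm (π.symm i)) (S := S) (k := k) (by omega)
    have hd := ccTabMu'_pos (b := T.symm (π.symm i)) (S := S) (k := k) (by omega)
    omega

end Aux5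

section Aux6

variable {lam : YoungDiagram} {n : ℕ}

lemma coeff_FTS (k : ℕ) (T S : Tab lam n) (m : (Fin n ⊕ Fin n) →₀ ℕ) :
    coeff m (FTS k T S) = ∑ τ ∈ colGroup T, ∑ σ ∈ rowGroup T,
      (if Finsupp.mapDomain (Sum.map ⇑(τ * σ) ⇑(τ * σ))
            (expE T (ccTabMu k S) (ccTabMu' k S)) = m
       then ((Equiv.Perm.sign τ : ℤ) : ℂ) else 0) := by
  simp only [FTS, FTcd, tabMonomial_eq, diagAct, rename_monomial, coeff_sum, coeff_smul,
    coeff_monomial, smul_eq_mul, mul_ite, mul_one, mul_zero]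

lemma one_mem_rowGroup (T : Tab lam n) : (1 : Equiv.Perm (Fin n)) ∈ rowGroup T := by
  rw [rowGroup, Finset.mem_filter]
  refine ⟨Finset.mem_univ _, fun b => ?_⟩
  simp

lemma one_mem_colGroup (T : Tab lam n) : (1 : Equiv.Perm (Fin n)) ∈ colGroup T := by
  rw [colGroup, Finset.mem_filter]
  refine ⟨Finset.mem_univ _, fun b => ?_⟩
  simp

lemma mapDomain_one_eq (E : (Fin n ⊕ Fin n) →₀ ℕ) :
    Finsupp.mapDomain (Sum.map ⇑(1 : Equiv.Perm (Fin n)) ⇑(1 : Equiv.Perm (Fin n))) E = E := by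
  rw [Equiv.Perm.coe_one, Sum.map_id_id, Finsupp.mapDomain_id]

lemma tau_eq_one (hlam : lam.card = n) (k : ℕ) (T S : Tab lam n) (hS : IsSYT S)
    (τ σ : Equiv.Perm (Fin n)) (hτ : τ ∈ colGroup T) (hσ : σ ∈ rowGroup T)
    (hcond : Finsupp.mapDomain (Sum.map ⇑(τ * σ) ⇑(τ * σ))
        (expE T (ccTabMu k S) (ccTabMu' k S)) = expE T (ccTabMu k S) (ccTabMu' k S)) :
    τ = 1 := by
  classical
  rw [colGroup, Finset.mem_filter] at hτ
  rw [rowGroup, Finset.mem_filter] at hσ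
  have hptc : ∀ b : Cell lam, ccTabMu k S (T.symm ((τ * σ) (T b))) = ccTabMu k S b := by
    intro b
    have h1 := congrArg (fun g : (Fin n ⊕ Fin n) →₀ ℕ => g (Sum.inl ((τ * σ) (T b)))) hcond
    rw [mapDomain_sumMap_apply_inl, expE_inl, expE_inl, Equiv.symm_apply_apply,
      Equiv.symm_apply_apply] at h1
    exact h1.symm
  have hptd : ∀ b : Cell lam, ccTabMu' k S (T.symm ((τ * σ) (T b))) = ccTabMu' k S b := by
    intro b
    have h1 := congrArg (fun g : (Fin n ⊕ Fin n) →₀ ℕ => g (Sum.inr ((τ * σ) (T b)))) hcond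
    rw [mapDomain_sumMap_apply_inr, expE_inr, expE_inr, Equiv.symm_apply_apply,
      Equiv.symm_apply_apply] at h1
    exact h1.symm
  have hfix := fix_of_theta (thetaS k S)
    (fun u v hcc hrr => theta_strict hS hcc hrr)
    (fun u => T.symm (τ (T u))) (fun b => T.symm (σ (T b)))
    (fun a b h => T.injective (τ.injective (T.symm.injective h)))
    (fun a b h => T.injective (σ.injective (T.symm.injective h)))
    (fun u => hτ.2 u) (fun u => hσ.2 u)
    (fun b => by
      have e : T.symm (τ (T (T.symm (σ (T b))))) = T.symm ((τ * σ) (T b)) := by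
        rw [Equiv.apply_symm_apply, Equiv.Perm.mul_apply]
      show thetaS k S (T.symm (τ (T (T.symm (σ (T b)))))) = thetaS k S b
      rw [e, thetaS, thetaS, hptc b, hptd b])
    (cellRow_lt hlam)
  apply Equiv.ext
  intro i
  have h2 := hfix (T.symm i)
  simp only [Equiv.apply_symm_apply] at h2
  have h3 : τ i = i := T.symm.injective h2
  simpa using h3

end Aux6

/-- For every pair `(T,S)` of standard Young tableaux of the same
shape of size `n`, the polynomial `F_T^S` does not lie in `𝓘_k`; in fact no monomial
occurring in `F_T^S` with nonzero coefficient lies in `𝓘_k`. -/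
theorem stmt2 (n k : ℕ) (hn : 1 ≤ n) (hk1 : 1 ≤ k) (hkn : k ≤ n)
    (lam : YoungDiagram) (hlam : lam.card = n)
    (T S : Tab lam n) (hT : IsSYT T) (hS : IsSYT S) :
    FTS k T S ∉ Ik n k ∧
    ∀ m ∈ (FTS k T S).support, (monomial m (1 : ℂ) : PolyXY n) ∉ Ik n k := by
  classical
  have hkey : ∀ τ ∈ colGroup T, ∀ σ ∈ rowGroup T,
      Finsupp.mapDomain (Sum.map ⇑(τ * σ) ⇑(τ * σ))
        (expE T (ccTabMu k S) (ccTabMu' k S)) = expE T (ccTabMu k S) (ccTabMu' k S) → τ = 1 :=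
    fun τ hτ σ hσ h => tau_eq_one hlam k T S hS τ σ hτ hσ h
  -- the coefficient of the identity monomial is a positive integer
  have hcondone : Finsupp.mapDomain (Sum.map ⇑((1 : Equiv.Perm (Fin n)) * 1)
      ⇑((1 : Equiv.Perm (Fin n)) * 1)) (expE T (ccTabMu k S) (ccTabMu' k S)) =
      expE T (ccTabMu k S) (ccTabMu' k S) := by
    rw [one_mul]; exact mapDomain_one_eq _
  have hEcoeff : coeff (expE T (ccTabMu k S) (ccTabMu' k S)) (FTS k T S) ≠ 0 := by
    rw [coeff_FTS]
    have step : ∑ τ ∈ colGroup T, ∑ σ ∈ rowGroup T,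
        (if Finsupp.mapDomain (Sum.map ⇑(τ * σ) ⇑(τ * σ))
              (expE T (ccTabMu k S) (ccTabMu' k S)) = expE T (ccTabMu k S) (ccTabMu' k S)
         then ((Equiv.Perm.sign τ : ℤ) : ℂ) else 0) =
        ((∑ τ ∈ colGroup T, ∑ σ ∈ rowGroup T,
          (if Finsupp.mapDomain (Sum.map ⇑(τ * σ) ⇑(τ * σ))
              (expE T (ccTabMu k S) (ccTabMu' k S)) = expE T (ccTabMu k S) (ccTabMu' k S)
           then (1 : ℕ) else 0) : ℕ) : ℂ) := by
      rw [Nat.cast_sum]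
      refine Finset.sum_congr rfl fun τ hτ => ?_
      rw [Nat.cast_sum]
      refine Finset.sum_congr rfl fun σ hσ => ?_
      by_cases h : Finsupp.mapDomain (Sum.map ⇑(τ * σ) ⇑(τ * σ))
          (expE T (ccTabMu k S) (ccTabMu' k S)) = expE T (ccTabMu k S) (ccTabMu' k S)
      · rw [if_pos h, if_pos h, hkey τ hτ σ hσ h]
        simp
      · rw [if_neg h, if_neg h]
        simp
    rw [step]
    rw [Nat.cast_ne_zero]
    have hpos : 0 < ∑ τ ∈ colGroup T, ∑ σ ∈ rowGroup T,
        (if Finsupp.mapDomain (Sum.map ⇑(τ * σ) ⇑(τ * σ))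
            (expE T (ccTabMu k S) (ccTabMu' k S)) = expE T (ccTabMu k S) (ccTabMu' k S)
         then (1 : ℕ) else 0) := by
      apply Finset.sum_pos' (fun i _ => Nat.zero_le _)
      refine ⟨1, one_mem_colGroup T, ?_⟩
      apply Finset.sum_pos' (fun i _ => Nat.zero_le _)
      exact ⟨1, one_mem_rowGroup T, by simp [hcondone]⟩
    omega
  have hsupp : ∀ m ∈ (FTS k T S).support, ∃ π : Equiv.Perm (Fin n),
      Finsupp.mapDomain (Sum.map ⇑π ⇑π) (expE T (ccTabMu k S) (ccTabMu' k S)) = m := by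
    intro m hm
    have hne := mem_support_iff.mp hm
    rw [coeff_FTS] at hne
    obtain ⟨τ, hτ, h1⟩ := Finset.exists_ne_zero_of_sum_ne_zero hne
    obtain ⟨σ, hσ, h2⟩ := Finset.exists_ne_zero_of_sum_ne_zero h1
    refine ⟨τ * σ, ?_⟩
    by_contra h
    rw [if_neg h] at h2
    exact h2 rfl
  constructor
  · intro hmem
    rw [Ik_eq, mem_ideal_span_monomial_image] at hmem
    obtain ⟨si, hsi, hle⟩ := hmem _ (mem_support_iff.mpr hEcoeff)
    rw [← mapDomain_one_eq (expE T (ccTabMu k S) (ccTabMu' k S))] at hle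
    exact noDiv n k hk1 hkn T S 1 si hsi hle
  · intro m hm hmem
    obtain ⟨π, rfl⟩ := hsupp m hm
    rw [Ik_eq, mem_ideal_span_monomial_image] at hmem
    obtain ⟨si, hsi, hle⟩ := hmem
      (Finsupp.mapDomain (Sum.map ⇑π ⇑π) (expE T (ccTabMu k S) (ccTabMu' k S)))
      (by rw [support_monomial]; simp)
    exact noDiv n k hk1 hkn T S π si hsi hle
end Aux2
end
end

section
/- Let n ≥ 1 and 1 ≤ k ≤ n. For every partition λ of n, every S ∈ SYT(λ), and every partition ν (possibly empty) all of whose parts are at most n−1, the polynomial F_S^S · e_ν^{(k)} does not lie in the ideal 𝓘_k (here F_S^S denotes F_T^S with T = S); i.e., F_S^S · e_ν^{(k)} is nonzero in P_n^{(k)} = ℂ[𝐱,𝐲]/𝓘_k. -/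
open MvPolynomial

noncomputable section

/-! ## Combinatorial core -/

namespace SpechtCore

variable {n k : ℕ} {lam : YoungDiagram}

/-- row of the cell containing value `v`. -/
def rwv (S : Tab lam n) (v : Fin n) : ℕ := cellRow (S.symm v)

/-- column of the cell containing value `v`. -/
def clv (S : Tab lam n) (v : Fin n) : ℕ := cellCol (S.symm v)

/-- index of the run containing `v`. -/
def runv (S : Tab lam n) (v : Fin n) : ℕ :=
  ((DesSet S).filter (fun d => d ≤ (v : ℕ))).card

def ccv (k : ℕ) (S : Tab lam n) (v : Fin n) : ℕ :=
  ((DesSet S).filter fun d => n - k + 1 ≤ d ∧ d ≤ (v : ℕ)).card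

def ddv (k : ℕ) (S : Tab lam n) (v : Fin n) : ℕ :=
  ((DesSet S).filter fun d => (v : ℕ) + 1 ≤ d ∧ d ≤ n - k).card

variable {S : Tab lam n}

lemma cell_eq_of_rc {b c : Cell lam} (hr : cellRow b = cellRow c)
    (hc : cellCol b = cellCol c) : b = c := by
  apply Subtype.ext
  exact Prod.ext hr hc

lemma val_eq_of_rc {v w : Fin n} (hr : rwv S v = rwv S w) (hc : clv S v = clv S w) :
    v = w := by
  have h := cell_eq_of_rc hr hc
  simpa using congrArg S h

lemma cell_mem (b : Cell lam) : (cellRow b, cellCol b) ∈ lam := by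
  have := b.2
  rw [YoungDiagram.mem_cells] at this
  simpa [cellRow, cellCol] using this

lemma clv_lt_rowLen (v : Fin n) : clv S v < lam.rowLen (rwv S v) := by
  have := cell_mem (S.symm v)
  rwa [YoungDiagram.mem_iff_lt_rowLen] at this

lemma rwv_lt (hlam : lam.card = n) (v : Fin n) : rwv S v < n := by
  classical
  set r := rwv S v with hr
  have hmem : (r, clv S v) ∈ lam := cell_mem (S.symm v)
  have hsub : (Finset.range (r + 1)).image (fun i => (i, (0 : ℕ))) ⊆ lam.cells := by
    intro p hp
    simp only [Finset.mem_image, Finset.mem_range] at hp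
    obtain ⟨i, hi, rfl⟩ := hp
    rw [YoungDiagram.mem_cells]
    exact lam.up_left_mem (by omega) (Nat.zero_le _) hmem
  have hcard : ((Finset.range (r + 1)).image (fun i => (i, (0 : ℕ)))).card = r + 1 := by
    rw [Finset.card_image_of_injective _ (fun a b h => by simpa using h)]
    simp
  have := Finset.card_le_card hsub
  rw [hcard] at this
  have hc : lam.cells.card = n := hlam
  omega

lemma mem_DesSet_iff {d : ℕ} :
    d ∈ DesSet S ↔ 1 ≤ d ∧ d ≤ n - 1 ∧ rowOfVal S d < rowOfVal S (d + 1) := by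
  simp [DesSet, Finset.mem_filter, Finset.mem_Icc, and_assoc]

lemma rowOfVal_val (v : Fin n) : rowOfVal S ((v : ℕ) + 1) = rwv S v := by
  have h : (v : ℕ) + 1 - 1 < n := by simpa using v.isLt
  rw [rowOfVal, dif_pos h]
  congr 1

lemma step_row {v w : Fin n} (hw : (w : ℕ) = (v : ℕ) + 1)
    (hnd : ((v : ℕ) + 1) ∉ DesSet S) : rwv S w ≤ rwv S v := by
  by_contra hlt
  apply hnd
  rw [mem_DesSet_iff]
  refine ⟨by omega, by have := w.isLt; omega, ?_⟩
  rw [rowOfVal_val v, ← hw, rowOfVal_val w]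
  omega

lemma no_descent_chain {a : Fin n} :
    ∀ (m : ℕ) (b : Fin n), (b : ℕ) = (a : ℕ) + m →
      (∀ d ∈ DesSet S, ¬((a : ℕ) < d ∧ d ≤ (b : ℕ))) → rwv S b ≤ rwv S a := by
  intro m
  induction m with
  | zero =>
    intro b hb _
    have : b = a := Fin.ext (by omega)
    simp [this]
  | succ m ih =>
    intro b hb hnd
    have hb' : (a : ℕ) + m < n := by have := b.isLt; omega
    set b' : Fin n := ⟨(a : ℕ) + m, hb'⟩ with hb'def
    have hval : (b' : ℕ) = (a : ℕ) + m := rfl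
    have h1 : rwv S b ≤ rwv S b' := by
      apply step_row (by omega)
      intro hmem
      exact hnd _ hmem ⟨by omega, by omega⟩
    have h2 : rwv S b' ≤ rwv S a := by
      apply ih b' (by omega)
      intro d hd hcond
      exact hnd d hd ⟨hcond.1, by omega⟩
    exact h1.trans h2

lemma norun {v w : Fin n} (hvw : (v : ℕ) ≤ (w : ℕ)) (hr : runv S v = runv S w) :
    ∀ d ∈ DesSet S, ¬((v : ℕ) < d ∧ d ≤ (w : ℕ)) := by
  classical
  have hsplit : (DesSet S).filter (fun d => d ≤ (w : ℕ)) =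
      (DesSet S).filter (fun d => d ≤ (v : ℕ)) ∪
      (DesSet S).filter (fun d => (v : ℕ) < d ∧ d ≤ (w : ℕ)) := by
    rw [← Finset.filter_or]
    apply Finset.filter_congr
    intro d _
    constructor
    · intro h; omega
    · intro h; rcases h with h | h <;> omega
  have hdisj : Disjoint ((DesSet S).filter (fun d => d ≤ (v : ℕ)))
      ((DesSet S).filter (fun d => (v : ℕ) < d ∧ d ≤ (w : ℕ))) := by
    rw [Finset.disjoint_left]
    intro d h1 h2
    simp only [Finset.mem_filter] at h1 h2
    omega
  have hcard : runv S w = runv S v +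
      ((DesSet S).filter (fun d => (v : ℕ) < d ∧ d ≤ (w : ℕ))).card := by
    rw [runv, runv, hsplit, Finset.card_union_of_disjoint hdisj]
  have hzero : ((DesSet S).filter (fun d => (v : ℕ) < d ∧ d ≤ (w : ℕ))).card = 0 := by
    omega
  rw [Finset.card_eq_zero] at hzero
  intro d hd hcond
  have : d ∈ (DesSet S).filter (fun d => (v : ℕ) < d ∧ d ≤ (w : ℕ)) :=
    Finset.mem_filter.mpr ⟨hd, hcond⟩
  rw [hzero] at this
  exact absurd this (Finset.notMem_empty d)

/-- same run, `v ≤ w` implies row weakly decreases. -/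
lemma run_row_mono {v w : Fin n} (hvw : (v : ℕ) ≤ (w : ℕ)) (hr : runv S v = runv S w) :
    rwv S w ≤ rwv S v :=
  no_descent_chain ((w : ℕ) - (v : ℕ)) w (by omega) (norun hvw hr)

/-- standardness geometry: if `u < w` but `w`'s row is not higher, then `w` is strictly
to the right. -/
lemma colgeom (hS : IsSYT S) {u w : Fin n} (huw : u < w) (hr : rwv S w ≤ rwv S u) :
    clv S u < clv S w := by
  by_contra hcol
  push_neg at hcol
  -- cell m at (rwv u, clv w)
  have hmem : ((rwv S u, clv S w) : ℕ × ℕ) ∈ lam :=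
    lam.up_left_mem (le_refl _) hcol (cell_mem (S.symm u))
  set m : Cell lam := ⟨(rwv S u, clv S w), (YoungDiagram.mem_cells _).mpr hmem⟩ with hm
  have hrow_m : cellRow m = rwv S u := rfl
  have hcol_m : cellCol m = clv S w := rfl
  -- S m ≤ u
  have hA : S m ≤ u := by
    rcases eq_or_lt_of_le hcol with heq | hlt
    · have : m = S.symm u := cell_eq_of_rc (by rw [hrow_m]; rfl) (by rw [hcol_m, heq]; rfl)
      rw [this]
      simp
    · have := hS.1 m (S.symm u) (by rw [hrow_m]; rfl) (by rw [hcol_m]; exact hlt)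
      simp only [Equiv.apply_symm_apply] at this
      exact le_of_lt this
  -- w ≤ S m
  have hB : w ≤ S m := by
    rcases eq_or_lt_of_le hr with heq | hlt
    · have : S.symm w = m := cell_eq_of_rc (by rw [hrow_m]; exact heq) (by rw [hcol_m]; rfl)
      rw [← this]
      simp
    · have := hS.2 (S.symm w) m (by rw [hcol_m]; rfl) (by rw [hrow_m]; exact hlt)
      simp only [Equiv.apply_symm_apply] at this
      exact le_of_lt this
  exact absurd (hB.trans hA) (not_le.mpr huw)

/-- same run, `v < w` implies column strictly increases. -/
lemma run_col_mono (hS : IsSYT S) {v w : Fin n} (hvw : v < w) (hr : runv S v = runv S w) :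
    clv S v < clv S w :=
  colgeom hS hvw (run_row_mono (le_of_lt hvw) hr)



open Finset

lemma rwv_apply (S : Tab lam n) (b : Cell lam) : rwv S (S b) = cellRow b := by
  rw [rwv, Equiv.symm_apply_apply]

lemma clv_apply (S : Tab lam n) (b : Cell lam) : clv S (S b) = cellCol b := by
  rw [clv, Equiv.symm_apply_apply]

lemma card_row_filter (S : Tab lam n) (r : ℕ) (P : ℕ → Prop) [DecidablePred P] :
    (univ.filter (fun v : Fin n => rwv S v = r ∧ P (clv S v))).card =
    ((Finset.range (lam.rowLen r)).filter P).card := by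
  classical
  apply Finset.card_nbij (i := fun v => clv S v)
  · intro v hv
    simp only [mem_coe, mem_filter, mem_univ, true_and, mem_range] at hv ⊢
    refine ⟨?_, hv.2⟩
    have := clv_lt_rowLen (S := S) v
    rwa [hv.1] at this
  · intro v hv w hw hvw
    simp only [coe_filter, Set.mem_setOf_eq, mem_univ, true_and] at hv hw
    exact val_eq_of_rc (by rw [hv.1, hw.1]) hvw
  · intro c' hc'
    simp only [coe_filter, Set.mem_setOf_eq, mem_range] at hc'
    have hmem : ((r, c') : ℕ × ℕ) ∈ lam := YoungDiagram.mem_iff_lt_rowLen.mpr hc'.1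
    set b : Cell lam := ⟨(r, c'), (YoungDiagram.mem_cells _).mpr hmem⟩ with hb
    refine ⟨S b, ?_, ?_⟩
    · simp only [coe_filter, Set.mem_setOf_eq, mem_univ, true_and, Set.mem_setOf_eq]
      rw [rwv_apply, clv_apply]
      exact ⟨rfl, hc'.2⟩
    · show clv S (S b) = c'
      rw [clv_apply]
      rfl

lemma card_row (S : Tab lam n) (r : ℕ) :
    (univ.filter (fun v : Fin n => rwv S v = r)).card = lam.rowLen r := by
  classical
  have h := card_row_filter S r (fun _ => True)
  simp only [and_true, filter_true] at h
  rw [h, Finset.card_range]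

lemma range_filter_lt (c m : ℕ) :
    ((Finset.range m).filter (fun x => x < c)).card = min c m := by
  classical
  have : (Finset.range m).filter (fun x => x < c) = Finset.range (min c m) := by
    ext x
    simp only [mem_filter, mem_range, lt_min_iff]
    tauto
  rw [this, Finset.card_range]

/-- The key counting lemma: every value in row `t` lands (under `π`) in a column
`< rowLen t`, provided images of same-row values have distinct columns. -/
lemma land_lt_rowLen (hlam : lam.card = n) (π : Equiv.Perm (Fin n))
    (hinj : ∀ v w : Fin n, rwv S v = rwv S w → clv S (π v) = clv S (π w) → v = w)
    (t : ℕ) :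
    ∀ w : Fin n, rwv S w = t → clv S (π w) < lam.rowLen t := by
  classical
  set c := lam.rowLen t with hc
  -- per-row quantities
  set Fb : ℕ → ℕ := fun r =>
    (univ.filter (fun v : Fin n => rwv S v = r ∧ c ≤ clv S (π v))).card with hFb
  set Gb : ℕ → ℕ := fun r =>
    (univ.filter (fun v : Fin n => rwv S v = r ∧ c ≤ clv S v)).card with hGb
  -- per-row inequality  Gb r ≤ Fb r
  have hrow : ∀ r, Gb r ≤ Fb r := by
    intro r
    have hFsmall_le_c :
        (univ.filter (fun v : Fin n => rwv S v = r ∧ ¬ c ≤ clv S (π v))).card ≤ c := by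
      have h := Finset.card_le_card_of_injOn
          (s := univ.filter (fun v : Fin n => rwv S v = r ∧ ¬ c ≤ clv S (π v)))
          (f := fun v => clv S (π v))
          (t := Finset.range c)
          ?_ ?_
      rotate_left
      · intro v hv
        simp only [mem_filter, mem_univ, true_and, not_le] at hv
        rw [mem_coe, mem_range]; exact (mem_filter.mp (mem_coe.mp hv)).2.2
      · intro v hv w hw hvw
        simp only [coe_filter, Set.mem_setOf_eq, mem_univ, true_and] at hv hw
        exact hinj v w (by rw [hv.1, hw.1]) hvw
      simpa using h
    have hFsmall_le_row :
        (univ.filter (fun v : Fin n => rwv S v = r ∧ ¬ c ≤ clv S (π v))).card ≤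
          lam.rowLen r := by
      rw [← card_row S r]
      apply Finset.card_le_card
      intro v hv
      simp only [mem_filter, mem_univ, true_and] at hv ⊢
      exact hv.1
    have hGsmall :
        (univ.filter (fun v : Fin n => rwv S v = r ∧ ¬ c ≤ clv S v)).card =
          min c (lam.rowLen r) := by
      have h1 := card_row_filter S r (fun x => ¬ c ≤ x)
      simp only [not_le] at h1 ⊢
      rw [h1, range_filter_lt]
    have hFsplit :
        (univ.filter (fun v : Fin n => rwv S v = r ∧ c ≤ clv S (π v))).card +
        (univ.filter (fun v : Fin n => rwv S v = r ∧ ¬ c ≤ clv S (π v))).card =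
        lam.rowLen r := by
      rw [← card_row S r]
      rw [show (univ.filter (fun v : Fin n => rwv S v = r ∧ c ≤ clv S (π v))) =
          ((univ.filter (fun v : Fin n => rwv S v = r)).filter
            (fun v => c ≤ clv S (π v))) by rw [Finset.filter_filter]]
      rw [show (univ.filter (fun v : Fin n => rwv S v = r ∧ ¬ c ≤ clv S (π v))) =
          ((univ.filter (fun v : Fin n => rwv S v = r)).filter
            (fun v => ¬ c ≤ clv S (π v))) by rw [Finset.filter_filter]]
      exact Finset.card_filter_add_card_filter_not _
    have hGsplit :
        (univ.filter (fun v : Fin n => rwv S v = r ∧ c ≤ clv S v)).card +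
        (univ.filter (fun v : Fin n => rwv S v = r ∧ ¬ c ≤ clv S v)).card =
        lam.rowLen r := by
      rw [← card_row S r]
      rw [show (univ.filter (fun v : Fin n => rwv S v = r ∧ c ≤ clv S v)) =
          ((univ.filter (fun v : Fin n => rwv S v = r)).filter
            (fun v => c ≤ clv S v)) by rw [Finset.filter_filter]]
      rw [show (univ.filter (fun v : Fin n => rwv S v = r ∧ ¬ c ≤ clv S v)) =
          ((univ.filter (fun v : Fin n => rwv S v = r)).filter
            (fun v => ¬ c ≤ clv S v)) by rw [Finset.filter_filter]]
      exact Finset.card_filter_add_card_filter_not _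
    simp only [hFb, hGb]
    omega
  -- global sums are equal
  have hsumF : ∑ r ∈ Finset.range n, Fb r =
      (univ.filter (fun v : Fin n => c ≤ clv S (π v))).card := by
    rw [Finset.card_eq_sum_card_fiberwise
      (f := fun v => rwv S v) (t := Finset.range n)
      (fun v _ => Finset.mem_range.mpr (rwv_lt hlam v))]
    apply Finset.sum_congr rfl
    intro r _
    simp only [hFb, hGb]
    congr 1
    ext v
    simp only [Finset.mem_filter, Finset.mem_univ, true_and]
    tauto
  have hsumG : ∑ r ∈ Finset.range n, Gb r =
      (univ.filter (fun v : Fin n => c ≤ clv S v)).card := by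
    rw [Finset.card_eq_sum_card_fiberwise
      (f := fun v => rwv S v) (t := Finset.range n)
      (fun v _ => Finset.mem_range.mpr (rwv_lt hlam v))]
    apply Finset.sum_congr rfl
    intro r _
    simp only [hFb, hGb]
    congr 1
    ext v
    simp only [Finset.mem_filter, Finset.mem_univ, true_and]
    tauto
  have hglobal : (univ.filter (fun v : Fin n => c ≤ clv S (π v))).card =
      (univ.filter (fun v : Fin n => c ≤ clv S v)).card := by
    apply Finset.card_nbij (i := fun v => π v)
    · intro v hv
      simp only [mem_coe, mem_filter, mem_univ, true_and] at hv ⊢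
      exact hv
    · intro v _ w _ hvw
      exact π.injective hvw
    · intro u hu
      simp only [coe_filter, Set.mem_setOf_eq, mem_univ, true_and] at hu
      exact ⟨π.symm u, by simpa using hu, by simp⟩
  have hsums : ∑ r ∈ Finset.range n, Gb r = ∑ r ∈ Finset.range n, Fb r := by
    rw [hsumF, hsumG, hglobal]
  have heach := (Finset.sum_eq_sum_iff_of_le (fun r _ => hrow r)).mp hsums
  -- Gb t = 0
  have hGt : Gb t = 0 := by
    simp only [hGb, Finset.card_eq_zero]
    rw [Finset.filter_eq_empty_iff]
    intro v _
    intro hcontra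
    have := clv_lt_rowLen (S := S) v
    rw [hcontra.1] at this
    omega
  -- conclude
  intro w hw
  by_contra hcl
  push_neg at hcl
  have htn : t < n := by
    have := rwv_lt (S := S) hlam w
    omega
  have hFt : Fb t = 0 := by
    have := heach t (Finset.mem_range.mpr htn)
    omega
  simp only [hFb, Finset.card_eq_zero] at hFt
  have : w ∈ (univ.filter (fun v : Fin n => rwv S v = t ∧ c ≤ clv S (π v))) :=
    Finset.mem_filter.mpr ⟨Finset.mem_univ _, hw, hcl⟩
  rw [hFt] at this
  exact absurd this (Finset.notMem_empty w)


/-- Main combinatorial lemma: a run-preserving permutation whose same-row images have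
distinct columns preserves rows. -/
lemma rowPreserved (hlam : lam.card = n) (hS : IsSYT S) (π : Equiv.Perm (Fin n))
    (hrun : ∀ v, runv S (π v) = runv S v)
    (hinj : ∀ v w : Fin n, rwv S v = rwv S w → clv S (π v) = clv S (π w) → v = w) :
    ∀ v, rwv S (π v) = rwv S v := by
  classical
  by_contra hcon
  push_neg at hcon
  obtain ⟨v₀, hv₀⟩ := hcon
  set Moved := univ.filter (fun v : Fin n => rwv S (π v) ≠ rwv S v) with hMoved
  have hne : Moved.Nonempty := ⟨v₀, Finset.mem_filter.mpr ⟨Finset.mem_univ _, hv₀⟩⟩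
  set t := Moved.sup (fun v => max (rwv S v) (rwv S (π v))) with ht
  obtain ⟨vm, hvmM, hvmt⟩ := Finset.exists_mem_eq_sup Moved hne
    (fun v => max (rwv S v) (rwv S (π v)))
  have hvm' : rwv S (π vm) ≠ rwv S vm := (Finset.mem_filter.mp hvmM).2
  have T3 : ∀ v : Fin n, (t < rwv S v ↔ t < rwv S (π v)) := by
    intro v
    by_cases hv : rwv S (π v) = rwv S v
    · rw [hv]
    · have hmem : v ∈ Moved := Finset.mem_filter.mpr ⟨Finset.mem_univ _, hv⟩
      have := Finset.le_sup (f := fun v => max (rwv S v) (rwv S (π v))) hmem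
      rw [← ht] at this
      simp only [max_le_iff] at this
      omega
  set B := univ.filter (fun w : Fin n => rwv S w = t ∧ rwv S (π w) < t) with hB
  have hW : ∀ w : Fin n, rwv S w = t → rwv S (π w) ≤ t := by
    intro w hw
    have := (T3 w).not
    simp only [not_lt] at this
    exact this.mp (by omega)
  have hBne : B.Nonempty := by
    rcases Nat.lt_or_ge (rwv S (π vm)) (rwv S vm) with hlt | hge
    · refine ⟨vm, Finset.mem_filter.mpr ⟨Finset.mem_univ _, ?_, ?_⟩⟩ <;> omega
    · have hgt : rwv S vm < rwv S (π vm) := by omega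
      have htvm : t = rwv S (π vm) := by omega
      by_contra hBe
      rw [Finset.not_nonempty_iff_eq_empty] at hBe
      have hcard : (univ.filter (fun v : Fin n => rwv S (π v) = t)).card =
          (univ.filter (fun v : Fin n => rwv S v = t)).card := by
        apply Finset.card_nbij (i := fun v => π v)
        · intro v hv
          simp only [mem_coe, mem_filter, mem_univ, true_and] at hv ⊢
          exact hv
        · intro v _ w _ hvw
          exact π.injective hvw
        · intro u hu
          simp only [coe_filter, Set.mem_setOf_eq, mem_univ, true_and] at hu
          exact ⟨π.symm u, by simpa using hu, by simp⟩
      have hsub : (univ.filter (fun v : Fin n => rwv S v = t)) ⊆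
          (univ.filter (fun v : Fin n => rwv S (π v) = t)) := by
        intro w hw
        simp only [Finset.mem_filter, Finset.mem_univ, true_and] at hw ⊢
        have h1 := hW w hw
        have h2 : w ∉ B := by rw [hBe]; exact Finset.notMem_empty w
        simp only [hB, Finset.mem_filter, Finset.mem_univ, true_and, not_and, not_lt] at h2
        have := h2 hw
        omega
      have hss : (univ.filter (fun v : Fin n => rwv S v = t)) ⊂
          (univ.filter (fun v : Fin n => rwv S (π v) = t)) := by
        rw [Finset.ssubset_iff_of_subset hsub]
        refine ⟨vm, ?_, ?_⟩
        · simp only [Finset.mem_filter, Finset.mem_univ, true_and]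
          omega
        · simp only [Finset.mem_filter, Finset.mem_univ, true_and]
          omega
      have := Finset.card_lt_card hss
      omega
  -- landing columns of fallers, and max landed run
  have hfall : ∀ b ∈ B, ∀ u : Fin n, rwv S u = t → runv S u = runv S b →
      clv S u < clv S (π b) := by
    intro b hb u hu hru
    simp only [hB, Finset.mem_filter, Finset.mem_univ, true_and] at hb
    have hπrun : runv S (π b) = runv S b := hrun b
    rcases lt_trichotomy u (π b) with h | h | h
    · exact run_col_mono hS h (by rw [hru, hπrun])
    · rw [h] at hu; omega
    · exfalso
      have : rwv S u ≤ rwv S (π b) :=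
        run_row_mono (le_of_lt h) (by rw [hπrun, hru])
      omega
  obtain ⟨bh, hbhB, hbhmax⟩ := Finset.exists_max_image B
    (fun b => (univ.filter (fun u : Fin n => rwv S u = t ∧ runv S u = runv S b)).sup
      (clv S)) hBne
  have hbh := (Finset.mem_filter.mp hbhB).2
  set ch := clv S (π bh) with hch
  have hch0 : 0 < ch := by
    have := hfall bh hbhB bh hbh.1 rfl
    omega
  have hgmaxbh : (univ.filter (fun u : Fin n => rwv S u = t ∧ runv S u = runv S bh)).sup
      (clv S) < ch := by
    rw [Finset.sup_lt_iff hch0]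
    intro u hu
    simp only [Finset.mem_filter, Finset.mem_univ, true_and] at hu
    exact hfall bh hbhB u hu.1 hu.2
  have hchlt : ch < lam.rowLen t := land_lt_rowLen hlam π hinj t bh hbh.1
  have hmemw : ((t, ch) : ℕ × ℕ) ∈ lam := YoungDiagram.mem_iff_lt_rowLen.mpr hchlt
  set wstar : Fin n := S ⟨(t, ch), (YoungDiagram.mem_cells _).mpr hmemw⟩ with hwstar
  have hwrow : rwv S wstar = t := by rw [hwstar, rwv_apply]; rfl
  have hwcol : clv S wstar = ch := by rw [hwstar, clv_apply]; rfl
  have hfallerless : ∀ b' ∈ B, runv S b' ≠ runv S wstar := by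
    intro b' hb' heq
    have h1 : clv S wstar < clv S (π b') := hfall b' hb' wstar hwrow heq.symm
    have h2 : clv S wstar ≤ (univ.filter (fun u : Fin n => rwv S u = t ∧
        runv S u = runv S b')).sup (clv S) := by
      apply Finset.le_sup
      simp only [Finset.mem_filter, Finset.mem_univ, true_and]
      exact ⟨hwrow, heq.symm⟩
    have h3 := hbhmax b' hb'
    omega
  set G := univ.filter (fun u : Fin n => rwv S u = t ∧ runv S u = runv S wstar) with hG
  have hGmap : ∀ u ∈ G, π u ∈ G := by
    intro u hu
    simp only [hG, Finset.mem_filter, Finset.mem_univ, true_and] at hu ⊢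
    have hunB : u ∉ B := fun hub => hfallerless u hub hu.2
    simp only [hB, Finset.mem_filter, Finset.mem_univ, true_and, not_and, not_lt] at hunB
    have h1 := hW u hu.1
    have h2 := hunB hu.1
    exact ⟨by omega, by rw [hrun u]; exact hu.2⟩
  have himage : G.image π = G := by
    apply Finset.eq_of_subset_of_card_le
    · intro x hx
      obtain ⟨u, hu, rfl⟩ := Finset.mem_image.mp hx
      exact hGmap u hu
    · rw [Finset.card_image_of_injective _ π.injective]
  have hwstarG : wstar ∈ G := by
    simp only [hG, Finset.mem_filter, Finset.mem_univ, true_and, and_true]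
    exact hwrow
  have hchim : ch ∈ G.image (fun u => clv S (π u)) := by
    have h1 : G.image (fun u => clv S (π u)) = (G.image π).image (clv S) := by
      rw [Finset.image_image]
      rfl
    rw [h1, himage]
    exact Finset.mem_image.mpr ⟨wstar, hwstarG, hwcol⟩
  obtain ⟨u, huG, hu⟩ := Finset.mem_image.mp hchim
  simp only [hG, Finset.mem_filter, Finset.mem_univ, true_and] at huG
  have hune : u ≠ bh := by
    intro h
    exact hfallerless bh hbhB (by rw [← h]; exact huG.2)
  exact hune (hinj u bh (by rw [huG.1, hbh.1]) (by rw [hu, ← hch]))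

lemma runv_identity (k : ℕ) (S : Tab lam n) (v : Fin n) :
    runv S v + ddv k S v =
      ((DesSet S).filter (fun d => d ≤ n - k)).card + ccv k S v := by
  classical
  have split : ∀ (P Q : ℕ → Prop) (_ : DecidablePred P) (_ : DecidablePred Q),
      (∀ d, ¬(P d ∧ Q d)) →
      ((DesSet S).filter P).card + ((DesSet S).filter Q).card =
      ((DesSet S).filter (fun d => P d ∨ Q d)).card := by
    intro P Q _ _ hPQ
    rw [Finset.filter_or]
    rw [Finset.card_union_of_disjoint]
    rw [Finset.disjoint_left]
    intro d h1 h2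
    simp only [Finset.mem_filter] at h1 h2
    exact hPQ d ⟨h1.2, h2.2⟩
  have h1 := split (fun d => d ≤ (v : ℕ)) (fun d => (v : ℕ) + 1 ≤ d ∧ d ≤ n - k)
    (by infer_instance) (by infer_instance) (fun d => by omega)
  have h2 := split (fun d => d ≤ n - k) (fun d => n - k + 1 ≤ d ∧ d ≤ (v : ℕ))
    (by infer_instance) (by infer_instance) (fun d => by omega)
  rw [runv, ddv, h1, ccv, h2]
  congr 1
  apply Finset.filter_congr
  intro d _
  constructor <;> intro h <;> omega

/-- Uniqueness claim: if `τσ` preserves the exponents then `τ = 1`. -/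
lemma tau_eq_one (hlam : lam.card = n) (hS : IsSYT S) {τ σ : Equiv.Perm (Fin n)}
    (hτ : τ ∈ colGroup S) (hσ : σ ∈ rowGroup S)
    (hcc : ∀ v, ccv k S ((τ * σ) v) = ccv k S v)
    (hdd : ∀ v, ddv k S ((τ * σ) v) = ddv k S v) : τ = 1 := by
  classical
  have hrowσ : ∀ v, rwv S (σ v) = rwv S v := by
    intro v
    have h := (Finset.mem_filter.mp hσ).2 (S.symm v)
    rwa [Equiv.apply_symm_apply] at h
  have hcolτ : ∀ v, clv S (τ v) = clv S v := by
    intro v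
    have h := (Finset.mem_filter.mp hτ).2 (S.symm v)
    rwa [Equiv.apply_symm_apply] at h
  set π := τ * σ with hπ
  have happ : ∀ v, π v = τ (σ v) := fun v => rfl
  have hrun : ∀ v, runv S (π v) = runv S v := by
    intro v
    have h1 := runv_identity (lam := lam) k S (π v)
    have h2 := runv_identity (lam := lam) k S v
    rw [hcc v, hdd v] at h1
    omega
  have hinj : ∀ v w : Fin n, rwv S v = rwv S w → clv S (π v) = clv S (π w) → v = w := by
    intro v w hr hcl
    rw [happ, happ] at hcl
    rw [hcolτ, hcolτ] at hcl
    have hrr : rwv S (σ v) = rwv S (σ w) := by rw [hrowσ, hrowσ]; exact hr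
    have := val_eq_of_rc hrr hcl
    exact σ.injective this
  have hrow := rowPreserved hlam hS π hrun hinj
  apply Equiv.ext
  intro u
  have hτu : τ u = π (σ.symm u) := by
    rw [happ, Equiv.apply_symm_apply]
  have h1 : rwv S (τ u) = rwv S u := by
    rw [hτu, hrow]
    have := hrowσ (σ.symm u)
    rw [Equiv.apply_symm_apply] at this
    exact this.symm
  have h2 : clv S (τ u) = clv S u := hcolτ u
  have := val_eq_of_rc h1 h2
  simpa using this


/-! ## Algebraic part -/

open Finset

variable (k) in
/-- The exponent of the base monomial of `F_S^S`. -/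
def EfS (S : Tab lam n) : (Fin n ⊕ Fin n) →₀ ℕ :=
  ∑ b : Cell lam, (Finsupp.single (Sum.inl (S b)) (ccTabMu k S b) +
    Finsupp.single (Sum.inr (S b)) (ccTabMu' k S b))

lemma ccTabMu_symm (i : Fin n) : ccTabMu k S (S.symm i) = ccv k S i := by
  simp [ccTabMu, ccv]

lemma ccTabMu'_symm (i : Fin n) : ccTabMu' k S (S.symm i) = ddv k S i := by
  simp [ccTabMu', ddv]

lemma EfS_inl (i : Fin n) : EfS k S (Sum.inl i) = ccv k S i := by
  classical
  rw [EfS, Finsupp.finset_sum_apply]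
  rw [Finset.sum_eq_single (S.symm i)]
  · simp only [Finsupp.add_apply, Equiv.apply_symm_apply]
    rw [Finsupp.single_eq_same, Finsupp.single_eq_of_ne (by simp), ccTabMu_symm]
    simp
  · intro b _ hb
    have h1 : Sum.inl (S b) ≠ (Sum.inl i : Fin n ⊕ Fin n) := by
      simp only [ne_eq, Sum.inl.injEq]
      intro h
      exact hb (by rw [← h, Equiv.symm_apply_apply])
    simp only [Finsupp.add_apply]
    rw [Finsupp.single_eq_of_ne' h1, Finsupp.single_eq_of_ne' (by simp)]
    simp
  · intro h
    exact absurd (Finset.mem_univ _) h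

lemma EfS_inr (i : Fin n) : EfS k S (Sum.inr i) = ddv k S i := by
  classical
  rw [EfS, Finsupp.finset_sum_apply]
  rw [Finset.sum_eq_single (S.symm i)]
  · simp only [Finsupp.add_apply, Equiv.apply_symm_apply]
    rw [Finsupp.single_eq_same, Finsupp.single_eq_of_ne (by simp), ccTabMu'_symm]
    simp
  · intro b _ hb
    have h1 : Sum.inr (S b) ≠ (Sum.inr i : Fin n ⊕ Fin n) := by
      simp only [ne_eq, Sum.inr.injEq]
      intro h
      exact hb (by rw [← h, Equiv.symm_apply_apply])
    simp only [Finsupp.add_apply]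
    rw [Finsupp.single_eq_of_ne' h1, Finsupp.single_eq_of_ne' (by simp)]
    simp
  · intro h
    exact absurd (Finset.mem_univ _) h

lemma prod_monomial_one {ι : Type*} (s : Finset ι) (u : ι → ((Fin n ⊕ Fin n) →₀ ℕ)) :
    (∏ i ∈ s, (monomial (u i) (1 : ℂ))) = monomial (∑ i ∈ s, u i) 1 := by
  classical
  induction s using Finset.cons_induction with
  | empty =>
    rw [Finset.prod_empty, Finset.sum_empty]
    simp
  | cons a s ha ih =>
    rw [Finset.prod_cons, Finset.sum_cons, ih, MvPolynomial.monomial_mul, one_mul]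

lemma tabMonomial_eq : tabMonomial S (ccTabMu k S) (ccTabMu' k S) =
    monomial (EfS k S) (1 : ℂ) := by
  classical
  rw [tabMonomial, EfS, ← prod_monomial_one]
  apply Finset.prod_congr rfl
  intro b _
  rw [X_pow_eq_monomial, X_pow_eq_monomial, MvPolynomial.monomial_mul, one_mul]

lemma mapDomain_perm_eq_iff (E : (Fin n ⊕ Fin n) →₀ ℕ) (π : Equiv.Perm (Fin n)) :
    E.mapDomain (Sum.map ⇑π ⇑π) = E ↔ ∀ v, E (Sum.map ⇑π ⇑π v) = E v := by
  have hco : ⇑(Equiv.sumCongr π π) = Sum.map ⇑π ⇑π := funext (Equiv.sumCongr_apply π π)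
  have hinj : Function.Injective (Sum.map ⇑π ⇑π) := by
    rw [← hco]; exact (Equiv.sumCongr π π).injective
  constructor
  · intro h v
    conv_lhs => rw [← h]
    exact Finsupp.mapDomain_apply hinj E v
  · intro h
    ext u
    have hu : Sum.map ⇑π ⇑π ((Equiv.sumCongr π π).symm u) = u := by
      rw [← hco, Equiv.apply_symm_apply]
    calc (E.mapDomain (Sum.map ⇑π ⇑π)) u
        = (E.mapDomain (Sum.map ⇑π ⇑π)) (Sum.map ⇑π ⇑π ((Equiv.sumCongr π π).symm u)) := by
          rw [hu]
      _ = E ((Equiv.sumCongr π π).symm u) := Finsupp.mapDomain_apply hinj _ _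
      _ = E (Sum.map ⇑π ⇑π ((Equiv.sumCongr π π).symm u)) := (h _).symm
      _ = E u := by rw [hu]

lemma one_mem_rowGroup : (1 : Equiv.Perm (Fin n)) ∈ rowGroup S := by
  simp [rowGroup]

lemma one_mem_colGroup : (1 : Equiv.Perm (Fin n)) ∈ colGroup S := by
  simp [colGroup]

/-- The coefficient of the base monomial in `F_S^S` is a positive integer. -/
lemma coeff_FTS (hlam : lam.card = n) (hS : IsSYT S) :
    coeff (EfS k S) (FTS k S S) =
      (((rowGroup S).filter (fun σ : Equiv.Perm (Fin n) =>
        (EfS k S).mapDomain (Sum.map ⇑σ ⇑σ) = EfS k S)).card : ℂ) := by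
  classical
  rw [FTS, FTcd]
  simp only [coeff_sum]
  rw [Finset.sum_eq_single_of_mem (1 : Equiv.Perm (Fin n)) one_mem_colGroup]
  · simp only [one_mul]
    have : ∀ σ ∈ rowGroup S,
        coeff (EfS k S) (((Equiv.Perm.sign (1 : Equiv.Perm (Fin n)) : ℤ) : ℂ) •
          diagAct σ (tabMonomial S (ccTabMu k S) (ccTabMu' k S))) =
        (if (EfS k S).mapDomain (Sum.map ⇑σ ⇑σ) = EfS k S then (1 : ℂ) else 0) := by
      intro σ _
      rw [tabMonomial_eq, diagAct, rename_monomial, coeff_smul, coeff_monomial]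
      simp
    rw [Finset.sum_congr rfl this, Finset.sum_boole]
  · intro τ hτ hτne
    apply Finset.sum_eq_zero
    intro σ hσ
    rw [tabMonomial_eq, diagAct, rename_monomial, coeff_smul, coeff_monomial]
    rw [if_neg, smul_zero]
    intro hcond
    apply hτne
    rw [mapDomain_perm_eq_iff] at hcond
    apply tau_eq_one (k := k) hlam hS hτ hσ
    · intro v
      have := hcond (Sum.inl v)
      simpa [EfS_inl] using this
    · intro v
      have := hcond (Sum.inr v)
      simpa [EfS_inr] using this

lemma coeff_FTS_ne_zero (hlam : lam.card = n) (hS : IsSYT S) :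
    coeff (EfS k S) (FTS k S S) ≠ 0 := by
  classical
  rw [coeff_FTS hlam hS]
  rw [Nat.cast_ne_zero]
  apply Finset.card_ne_zero_of_mem (a := (1 : Equiv.Perm (Fin n)))
  rw [Finset.mem_filter]
  refine ⟨one_mem_rowGroup, ?_⟩
  have : Sum.map ⇑(1 : Equiv.Perm (Fin n)) ⇑(1 : Equiv.Perm (Fin n)) =
      (id : Fin n ⊕ Fin n → Fin n ⊕ Fin n) := by
    funext v
    cases v <;> simp
  rw [this, Finsupp.mapDomain_id]


lemma ccv_ne_imp {i : Fin n} (h : ccv k S i ≠ 0) : n - k + 1 ≤ (i : ℕ) := by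
  rw [ccv] at h
  obtain ⟨d, hd⟩ := Finset.card_pos.mp (Nat.pos_of_ne_zero h)
  rw [Finset.mem_filter] at hd
  omega

lemma ddv_ne_imp {i : Fin n} (h : ddv k S i ≠ 0) : (i : ℕ) + 1 ≤ n - k := by
  rw [ddv] at h
  obtain ⟨d, hd⟩ := Finset.card_pos.mp (Nat.pos_of_ne_zero h)
  rw [Finset.mem_filter] at hd
  omega

end SpechtCore


/-! ## The killing homomorphism -/

namespace SpechtPhi

open Finset

/-- substitute `0` for all variables outside the allowed window. -/
def gsub (n k : ℕ) : Fin n ⊕ Fin n → PolyXY n :=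
  Sum.elim (fun i => if n - k + 1 ≤ (i : ℕ) then X (Sum.inl i) else 0)
           (fun i => if (i : ℕ) + 1 ≤ n - k then X (Sum.inr i) else 0)

lemma gsub_cases (n k : ℕ) (v : Fin n ⊕ Fin n) :
    gsub n k v = X v ∨ gsub n k v = 0 := by
  cases v <;> simp only [gsub, Sum.elim_inl, Sum.elim_inr] <;> split_ifs <;> simp

lemma coeff_phi {n k : ℕ} (p : PolyXY n) (E : (Fin n ⊕ Fin n) →₀ ℕ)
    (hE : ∀ v ∈ E.support, gsub n k v = X v) :
    coeff E (aeval (gsub n k) p) = coeff E p := by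
  classical
  induction p using MvPolynomial.induction_on' with
  | monomial u a =>
    by_cases hgood : ∀ v ∈ u.support, gsub n k v = X v
    · rw [aeval_monomial]
      have hprod : (u.prod fun v e => gsub n k v ^ e) = u.prod fun v e => X v ^ e :=
        Finsupp.prod_congr (fun v hv => by rw [hgood v hv])
      rw [hprod, MvPolynomial.algebraMap_eq, ← MvPolynomial.monomial_eq]
    · push_neg at hgood
      obtain ⟨v0, hv0, hbad⟩ := hgood
      have hz : gsub n k v0 = 0 := (gsub_cases n k v0).resolve_left hbad
      rw [aeval_monomial, Finsupp.prod, Finset.prod_eq_zero hv0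
        (by rw [hz, zero_pow (Finsupp.mem_support_iff.mp hv0)]), mul_zero]
      rw [coeff_zero, coeff_monomial,
        if_neg (fun h : u = E => hbad (hE v0 (h ▸ hv0)))]
  | add p q hp hq =>
    rw [map_add, coeff_add, coeff_add, hp, hq]

lemma card_filter_le_val (n c : ℕ) (hc : c ≤ n) :
    (univ.filter fun i : Fin n => c ≤ (i : ℕ)).card = n - c := by
  classical
  rw [show (univ.filter fun i : Fin n => c ≤ (i : ℕ)).card = (Finset.Ico c n).card by
    apply Finset.card_nbij (i := Fin.val)
    · intro i hi
      simp only [mem_coe, Finset.mem_filter, Finset.mem_univ, true_and] at hi ⊢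
      rw [Finset.mem_Ico]
      exact ⟨hi, i.isLt⟩
    · intro i _ j _ hij
      exact Fin.ext hij
    · intro m hm
      simp only [coe_Ico, Set.mem_Ico] at hm
      exact ⟨⟨m, hm.2⟩, by simp [hm.1], rfl⟩]
  rw [Nat.card_Ico]

lemma card_filter_succ_le (n m : ℕ) (hm : m ≤ n) :
    (univ.filter fun i : Fin n => (i : ℕ) + 1 ≤ m).card = m := by
  classical
  rw [show (univ.filter fun i : Fin n => (i : ℕ) + 1 ≤ m).card = (Finset.range m).card by
    apply Finset.card_nbij (i := Fin.val)
    · intro i hi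
      simp only [mem_coe, Finset.mem_filter, Finset.mem_univ, true_and] at hi ⊢
      rw [Finset.mem_range]
      omega
    · intro i _ j _ hij
      exact Fin.ext hij
    · intro x hx
      simp only [coe_range, Set.mem_Iio] at hx
      exact ⟨⟨x, by omega⟩, by simp; omega, rfl⟩]
  rw [Finset.card_range]

lemma Ik_le_ker (n k : ℕ) (hk1 : 1 ≤ k) (hkn : k ≤ n) :
    Ik n k ≤ RingHom.ker (MvPolynomial.aeval (gsub n k) : PolyXY n →ₐ[ℂ] PolyXY n) := by
  classical
  rw [Ik, Ideal.span_le]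
  intro p hp
  simp only [Set.mem_union, Set.mem_setOf_eq] at hp
  rw [SetLike.mem_coe, RingHom.mem_ker]
  rcases hp with (⟨A, hA, rfl⟩ | ⟨B, hB, rfl⟩) | ⟨i, rfl⟩
  · rw [map_prod]
    have hex : ∃ i ∈ A, ¬ (n - k + 1 ≤ (i : ℕ)) := by
      by_contra hcon
      push_neg at hcon
      have hsub : A ⊆ univ.filter fun i : Fin n => n - k + 1 ≤ (i : ℕ) := by
        intro i hi
        simp only [Finset.mem_filter, Finset.mem_univ, true_and]
        exact hcon i hi
      have := Finset.card_le_card hsub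
      rw [hA, card_filter_le_val n _ (by omega)] at this
      omega
    obtain ⟨i, hiA, hi⟩ := hex
    apply Finset.prod_eq_zero hiA
    rw [aeval_X]
    simp only [gsub, Sum.elim_inl]
    rw [if_neg hi]
  · rw [map_prod]
    have hex : ∃ j ∈ B, ¬ ((j : ℕ) + 1 ≤ n - k) := by
      by_contra hcon
      push_neg at hcon
      have hsub : B ⊆ univ.filter fun i : Fin n => (i : ℕ) + 1 ≤ n - k := by
        intro i hi
        simp only [Finset.mem_filter, Finset.mem_univ, true_and]
        exact hcon i hi
      have := Finset.card_le_card hsub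
      rw [hB, card_filter_succ_le n _ (by omega)] at this
      omega
    obtain ⟨j, hjB, hj⟩ := hex
    apply Finset.prod_eq_zero hjB
    rw [aeval_X]
    simp only [gsub, Sum.elim_inr]
    rw [if_neg hj]
  · rw [map_mul, aeval_X, aeval_X]
    simp only [gsub, Sum.elim_inl, Sum.elim_inr]
    by_cases hc : n - k + 1 ≤ (i : ℕ)
    · have h2 : ¬((i : ℕ) + 1 ≤ n - k) := by omega
      rw [if_neg h2, mul_zero]
    · rw [if_neg hc, zero_mul]

/-! ### esymm coefficients -/

lemma sum_single_apply_mem {n : ℕ} (c : Fin n → Fin n ⊕ Fin n)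
    (hc : Function.Injective c) (s : Finset (Fin n)) (j : Fin n) :
    (∑ i ∈ s, Finsupp.single (c i) (1 : ℕ)) (c j) = if j ∈ s then 1 else 0 := by
  classical
  rw [Finsupp.finset_sum_apply]
  have h1 : ∀ i ∈ s, (Finsupp.single (c i) (1 : ℕ)) (c j) = if i = j then 1 else 0 := by
    intro i _
    rw [Finsupp.single_apply]
    by_cases hij : i = j
    · rw [if_pos hij, if_pos (by rw [hij])]
    · rw [if_neg hij, if_neg (fun hcc => hij (hc hcc))]
  rw [Finset.sum_congr rfl h1]
  exact Finset.sum_ite_eq' s j (fun _ => 1)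

lemma sum_single_apply_notmem {n : ℕ} (c : Fin n → Fin n ⊕ Fin n)
    (s : Finset (Fin n)) (w : Fin n ⊕ Fin n) (hw : ∀ i, c i ≠ w) :
    (∑ i ∈ s, Finsupp.single (c i) (1 : ℕ)) w = 0 := by
  classical
  rw [Finsupp.finset_sum_apply]
  apply Finset.sum_eq_zero
  intro i _
  exact Finsupp.single_eq_of_ne' (hw i)

lemma sum_single_injective {n : ℕ} (c : Fin n → Fin n ⊕ Fin n)
    (hc : Function.Injective c) (s t : Finset (Fin n))
    (h : (∑ i ∈ s, Finsupp.single (c i) (1 : ℕ)) = ∑ i ∈ t, Finsupp.single (c i) (1 : ℕ)) :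
    s = t := by
  ext j
  have hj := congrArg (fun E => E (c j)) h
  rw [sum_single_apply_mem c hc s j, sum_single_apply_mem c hc t j] at hj
  by_cases hs : j ∈ s <;> by_cases ht : j ∈ t <;> simp [hs, ht] at hj ⊢

lemma coeff_rename_esymm {n : ℕ} (c : Fin n → Fin n ⊕ Fin n)
    (hc : Function.Injective c) (s : Finset (Fin n)) :
    coeff (∑ i ∈ s, Finsupp.single (c i) 1)
      (rename c (esymm (Fin n) ℂ s.card)) = 1 := by
  classical
  rw [MvPolynomial.esymm_eq_sum_monomial, map_sum]
  have hren : ∀ t ∈ Finset.powersetCard s.card (univ : Finset (Fin n)),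
      rename c (monomial (∑ i ∈ t, Finsupp.single i 1) (1 : ℂ)) =
      monomial (∑ i ∈ t, Finsupp.single (c i) 1) 1 := by
    intro t _
    rw [rename_monomial, Finsupp.mapDomain_finset_sum,
      Finset.sum_congr rfl (fun (i : Fin n) (_ : i ∈ t) => Finsupp.mapDomain_single)]
  rw [Finset.sum_congr rfl hren, coeff_sum]
  have hcond : ∀ t ∈ Finset.powersetCard s.card (univ : Finset (Fin n)),
      coeff (∑ i ∈ s, Finsupp.single (c i) 1)
        (monomial (∑ i ∈ t, Finsupp.single (c i) 1) (1 : ℂ)) =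
      if t = s then (1 : ℂ) else 0 := by
    intro t _
    rw [coeff_monomial]
    by_cases h : t = s
    · rw [if_pos (by rw [h]), if_pos h]
    · rw [if_neg (fun hh => h (sum_single_injective c hc t s hh)), if_neg h]
  rw [Finset.sum_congr rfl hcond]
  rw [Finset.sum_ite_eq' _ s (fun _ => (1 : ℂ))]
  exact if_pos (Finset.mem_powersetCard_univ.mpr rfl)

lemma phi_edk_ne {n k : ℕ} (hk1 : 1 ≤ k) (hkn : k ≤ n) (d : ℕ)
    (hd1 : 1 ≤ d) (hd2 : d ≤ n - 1) :
    MvPolynomial.aeval (gsub n k) (edk n k d) ≠ 0 := by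
  classical
  rw [edk]
  by_cases hcase : d ≤ k - 1
  · rw [if_pos hcase]
    obtain ⟨A₀, hsub, hcard⟩ := Finset.exists_subset_card_eq
      (show d ≤ (univ.filter fun i : Fin n => n - k + 1 ≤ (i : ℕ)).card by
        rw [card_filter_le_val n _ (by omega)]; omega)
    set E₀ : (Fin n ⊕ Fin n) →₀ ℕ := ∑ i ∈ A₀, Finsupp.single (Sum.inl i) 1 with hE₀
    have hgood : ∀ v ∈ E₀.support, gsub n k v = X v := by
      intro v hv
      rw [Finsupp.mem_support_iff] at hv
      cases v with
      | inl i =>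
        rw [hE₀, sum_single_apply_mem (fun i : Fin n => (Sum.inl i : Fin n ⊕ Fin n))
          (fun a b h => by simpa using h) A₀ i] at hv
        have hiA : i ∈ A₀ := by by_contra hno; rw [if_neg hno] at hv; exact hv rfl
        have := hsub hiA
        simp only [Finset.mem_filter, Finset.mem_univ, true_and] at this
        simp only [gsub, Sum.elim_inl]
        rw [if_pos this]
      | inr i =>
        exfalso
        apply hv
        rw [hE₀]
        exact sum_single_apply_notmem _ A₀ _ (fun i => by simp)
    intro h0
    have hc := coeff_phi (rename Sum.inl (esymm (Fin n) ℂ d)) E₀ hgood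
    rw [h0, coeff_zero] at hc
    rw [hE₀, ← hcard] at hc
    rw [coeff_rename_esymm (c := fun i : Fin n => (Sum.inl i : Fin n ⊕ Fin n))
      (fun a b h => by simpa using h) A₀] at hc
    exact one_ne_zero hc.symm
  · rw [if_neg hcase]
    obtain ⟨B₀, hsub, hcard⟩ := Finset.exists_subset_card_eq
      (show n - d ≤ (univ.filter fun i : Fin n => (i : ℕ) + 1 ≤ n - k).card by
        rw [card_filter_succ_le n _ (by omega)]; omega)
    set E₀ : (Fin n ⊕ Fin n) →₀ ℕ := ∑ i ∈ B₀, Finsupp.single (Sum.inr i) 1 with hE₀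
    have hgood : ∀ v ∈ E₀.support, gsub n k v = X v := by
      intro v hv
      rw [Finsupp.mem_support_iff] at hv
      cases v with
      | inr i =>
        rw [hE₀, sum_single_apply_mem (fun i : Fin n => (Sum.inr i : Fin n ⊕ Fin n))
          (fun a b h => by simpa using h) B₀ i] at hv
        have hiB : i ∈ B₀ := by by_contra hno; rw [if_neg hno] at hv; exact hv rfl
        have := hsub hiB
        simp only [Finset.mem_filter, Finset.mem_univ, true_and] at this
        simp only [gsub, Sum.elim_inr]
        rw [if_pos this]
      | inl i =>
        exfalso
        apply hv
        rw [hE₀]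
        exact sum_single_apply_notmem _ B₀ _ (fun i => by simp)
    intro h0
    have hc := coeff_phi (rename Sum.inr (esymm (Fin n) ℂ (n - d))) E₀ hgood
    rw [h0, coeff_zero] at hc
    rw [hE₀, ← hcard] at hc
    rw [coeff_rename_esymm (c := fun i : Fin n => (Sum.inr i : Fin n ⊕ Fin n))
      (fun a b h => by simpa using h) B₀] at hc
    exact one_ne_zero hc.symm

end SpechtPhi


/-- For every standard Young tableau `S` of a shape of size `n` and
every partition `ν` (possibly empty) with all parts at most `n−1`, the polynomial
`F_S^S · e_ν^{(k)}` does not lie in `𝓘_k`. -/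
theorem stmt3 (n k : ℕ) (hn : 1 ≤ n) (hk1 : 1 ≤ k) (hkn : k ≤ n)
    (lam : YoungDiagram) (hlam : lam.card = n)
    (S : Tab lam n) (hS : IsSYT S)
    (nu : Multiset ℕ) (hnu : ∀ p ∈ nu, 1 ≤ p ∧ p ≤ n - 1) :
    FTS k S S * enuk n k nu ∉ Ik n k := by
  classical
  intro hmem
  have hker := SpechtPhi.Ik_le_ker n k hk1 hkn hmem
  rw [RingHom.mem_ker, map_mul] at hker
  have hEgood : ∀ v ∈ (SpechtCore.EfS k S).support, SpechtPhi.gsub n k v = X v := by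
    intro v hv
    rw [Finsupp.mem_support_iff] at hv
    cases v with
    | inl i =>
      rw [SpechtCore.EfS_inl] at hv
      have := SpechtCore.ccv_ne_imp hv
      simp only [SpechtPhi.gsub, Sum.elim_inl]
      rw [if_pos this]
    | inr i =>
      rw [SpechtCore.EfS_inr] at hv
      have := SpechtCore.ddv_ne_imp hv
      simp only [SpechtPhi.gsub, Sum.elim_inr]
      rw [if_pos this]
  have hF : MvPolynomial.aeval (SpechtPhi.gsub n k) (FTS k S S) ≠ 0 := by
    intro h0
    have hc := SpechtPhi.coeff_phi (FTS k S S) (SpechtCore.EfS k S) hEgood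
    rw [h0, coeff_zero] at hc
    exact SpechtCore.coeff_FTS_ne_zero hlam hS hc.symm
  have hE : MvPolynomial.aeval (SpechtPhi.gsub n k) (enuk n k nu) ≠ 0 := by
    rw [enuk, map_multiset_prod, Multiset.map_map]
    apply Multiset.prod_ne_zero
    intro h0
    rw [Multiset.mem_map] at h0
    obtain ⟨d, hd, hd0⟩ := h0
    exact SpechtPhi.phi_edk_ne hk1 hkn d (hnu d hd).1 (hnu d hd).2 hd0
  exact mul_ne_zero hF hE hker
end
end

section
/- Let n ≥ 1, let λ be a partition of n with conjugate partition λ′, let T ∈ Tab(λ), and let c, d be functions from the cells of λ to ℕ. Let a < b be two column indices of λ and let t be a row index with t ≤ λ′_b (so column b contains a cell in row t, counting rows from the bottom starting at 1). Let A be the set of entries of T lying in column a in rows ≥ t, let B be the set of entries of T lying in column b in rows ≤ t, and let S^{a,b}_t ≤ Sₙ be the subgroup of all permutations fixing every element of {1,…,n} outside A ∪ B. Then the Garnir element G^{a,b}_t = Σ_{ω ∈ S^{a,b}_t} sgn(ω)·ω annihilates F_T^{c,d}: G^{a,b}_t · F_T^{c,d} = 0 in ℂ[𝐱,𝐲]. 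-/
open MvPolynomial

noncomputable section

/-- The set `A` of entries of `T` lying in column `a` in rows `≥ t` (rows and columns
`0`-indexed, rows counted from the bottom). -/
def garnirA {lam : YoungDiagram} {n : ℕ} (T : Tab lam n) (a t : ℕ) : Finset (Fin n) :=
  ((Finset.univ : Finset (Cell lam)).filter
    fun cel => cellCol cel = a ∧ t ≤ cellRow cel).image fun cel => T cel

/-- The set `B` of entries of `T` lying in column `b` in rows `≤ t`. -/
def garnirB {lam : YoungDiagram} {n : ℕ} (T : Tab lam n) (b t : ℕ) : Finset (Fin n) :=
  ((Finset.univ : Finset (Cell lam)).filter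
    fun cel => cellCol cel = b ∧ cellRow cel ≤ t).image fun cel => T cel

/-- The subgroup `S^{a,b}_t` of permutations fixing everything outside `A ∪ B`,
as a finset. -/
def garnirGroup {lam : YoungDiagram} {n : ℕ} (T : Tab lam n) (a b t : ℕ) :
    Finset (Equiv.Perm (Fin n)) :=
  Finset.univ.filter fun ω : Equiv.Perm (Fin n) =>
    ∀ j : Fin n, j ∉ garnirA T a t ∪ garnirB T b t → ω j = j

section Aux

variable {lam : YoungDiagram} {n : ℕ}

lemma diagAct_sum (π : Equiv.Perm (Fin n)) {ι : Type*} (s : Finset ι) (f : ι → PolyXY n) :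
    diagAct π (∑ i ∈ s, f i) = ∑ i ∈ s, diagAct π (f i) :=
  map_sum (rename (Sum.map ⇑π ⇑π)) f s

lemma diagAct_smul (π : Equiv.Perm (Fin n)) (z : ℂ) (f : PolyXY n) :
    diagAct π (z • f) = z • diagAct π f :=
  map_smul (rename (Sum.map ⇑π ⇑π)).toLinearMap z f

lemma diagAct_mul (π ρ : Equiv.Perm (Fin n)) (f : PolyXY n) :
    diagAct (π * ρ) f = diagAct π (diagAct ρ f) := by
  unfold diagAct
  rw [rename_rename]
  congr 1
  ext x
  cases x <;> simp

lemma filt_mul (T : Tab lam n) (f : Cell lam → ℕ) {σ₁ σ₂ : Equiv.Perm (Fin n)}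
    (h1 : ∀ b : Cell lam, f (T.symm (σ₁ (T b))) = f b)
    (h2 : ∀ b : Cell lam, f (T.symm (σ₂ (T b))) = f b) :
    ∀ b : Cell lam, f (T.symm ((σ₁ * σ₂) (T b))) = f b := by
  intro b
  have hb' := h1 (T.symm (σ₂ (T b)))
  rw [Equiv.apply_symm_apply] at hb'
  rw [Equiv.Perm.mul_apply, hb']
  exact h2 b

lemma filt_inv (T : Tab lam n) (f : Cell lam → ℕ) {σ : Equiv.Perm (Fin n)}
    (h : ∀ b : Cell lam, f (T.symm (σ (T b))) = f b) :
    ∀ b : Cell lam, f (T.symm (σ⁻¹ (T b))) = f b := by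
  intro b
  have h' := h (T.symm (σ⁻¹ (T b)))
  rw [Equiv.apply_symm_apply, ← Equiv.Perm.mul_apply, mul_inv_cancel, Equiv.Perm.one_apply,
    Equiv.symm_apply_apply] at h'
  exact h'.symm

lemma mem_rowGroup_iff {T : Tab lam n} {σ : Equiv.Perm (Fin n)} :
    σ ∈ rowGroup T ↔ ∀ b : Cell lam, cellRow (T.symm (σ (T b))) = cellRow b := by
  simp [rowGroup]

lemma mem_colGroup_iff {T : Tab lam n} {σ : Equiv.Perm (Fin n)} :
    σ ∈ colGroup T ↔ ∀ b : Cell lam, cellCol (T.symm (σ (T b))) = cellCol b := by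
  simp [colGroup]

lemma mul_mem_rowGroup {T : Tab lam n} {σ₁ σ₂ : Equiv.Perm (Fin n)}
    (h1 : σ₁ ∈ rowGroup T) (h2 : σ₂ ∈ rowGroup T) : σ₁ * σ₂ ∈ rowGroup T :=
  mem_rowGroup_iff.mpr (filt_mul T cellRow (mem_rowGroup_iff.mp h1) (mem_rowGroup_iff.mp h2))

lemma inv_mem_rowGroup {T : Tab lam n} {σ : Equiv.Perm (Fin n)}
    (h : σ ∈ rowGroup T) : σ⁻¹ ∈ rowGroup T :=
  mem_rowGroup_iff.mpr (filt_inv T cellRow (mem_rowGroup_iff.mp h))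

lemma swap_mem_rowGroup {T : Tab lam n} {p q : Cell lam} (h : cellRow p = cellRow q) :
    Equiv.swap (T p) (T q) ∈ rowGroup T := by
  rw [mem_rowGroup_iff]
  intro b
  rcases eq_or_ne b p with rfl | hbp
  · rw [Equiv.swap_apply_left, Equiv.symm_apply_apply]
    exact h.symm
  · rcases eq_or_ne b q with rfl | hbq
    · rw [Equiv.swap_apply_right, Equiv.symm_apply_apply]
      exact h
    · rw [Equiv.swap_apply_of_ne_of_ne (T.injective.ne hbp) (T.injective.ne hbq),
        Equiv.symm_apply_apply]

lemma mem_garnirGroup_iff {T : Tab lam n} {a b t : ℕ} {ω : Equiv.Perm (Fin n)} :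
    ω ∈ garnirGroup T a b t ↔
      ∀ j : Fin n, j ∉ garnirA T a t ∪ garnirB T b t → ω j = j := by
  simp [garnirGroup]

lemma mul_mem_garnirGroup {T : Tab lam n} {a b t : ℕ} {ω₁ ω₂ : Equiv.Perm (Fin n)}
    (h1 : ω₁ ∈ garnirGroup T a b t) (h2 : ω₂ ∈ garnirGroup T a b t) :
    ω₁ * ω₂ ∈ garnirGroup T a b t := by
  rw [mem_garnirGroup_iff] at *
  intro j hj
  rw [Equiv.Perm.mul_apply, h2 j hj, h1 j hj]

lemma swap_mem_garnirGroup {T : Tab lam n} {a b t : ℕ} {i j : Fin n}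
    (hi : i ∈ garnirA T a t ∪ garnirB T b t) (hj : j ∈ garnirA T a t ∪ garnirB T b t) :
    Equiv.swap i j ∈ garnirGroup T a b t := by
  rw [mem_garnirGroup_iff]
  intro k hk
  exact Equiv.swap_apply_of_ne_of_ne (fun h => hk (h ▸ hi)) (fun h => hk (h ▸ hj))

lemma mem_garnirA_iff {T : Tab lam n} {a t : ℕ} {i : Fin n} :
    i ∈ garnirA T a t ↔
      ∃ cel : Cell lam, (cellCol cel = a ∧ t ≤ cellRow cel) ∧ T cel = i := by
  simp [garnirA]

lemma mem_garnirB_iff {T : Tab lam n} {b t : ℕ} {j : Fin n} :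
    j ∈ garnirB T b t ↔
      ∃ cel : Cell lam, (cellCol cel = b ∧ cellRow cel ≤ t) ∧ T cel = j := by
  simp [garnirB]

lemma garnir_pigeonhole (T : Tab lam n) {a b t : ℕ} (hab : a < b)
    (htb : (t, b) ∈ lam.cells) {π : Equiv.Perm (Fin n)}
    (hπ : ∀ cel : Cell lam, cellCol (T.symm (π (T cel))) = cellCol cel) :
    ∃ i ∈ garnirA T a t, ∃ j ∈ garnirB T b t,
      cellRow (T.symm (π i)) = cellRow (T.symm (π j)) := by
  classical
  have htb' : t < lam.colLen b :=
    YoungDiagram.mem_iff_lt_colLen.mp ((lam.mem_cells _).mp htb)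
  have hba : lam.colLen b ≤ lam.colLen a := lam.colLen_anti a b hab.le
  have hta : t < lam.colLen a := lt_of_lt_of_le htb' hba
  set g : Fin n → ℕ := fun i => cellRow (T.symm (π i)) with hg
  -- column of the cell of π i, for i in A (resp. B)
  have haprop : ∀ i ∈ garnirA T a t, cellCol (T.symm (π i)) = a := by
    intro i hi
    obtain ⟨cel, ⟨hcol, -⟩, rfl⟩ := mem_garnirA_iff.mp hi
    rw [hπ cel, hcol]
  have hbprop : ∀ j ∈ garnirB T b t, cellCol (T.symm (π j)) = b := by
    intro j hj
    obtain ⟨cel, ⟨hcol, -⟩, rfl⟩ := mem_garnirB_iff.mp hj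
    rw [hπ cel, hcol]
  have hinjA : Set.InjOn g (garnirA T a t) := by
    intro i₁ h₁ i₂ h₂ hgeq
    have hc₁ := haprop i₁ (Finset.mem_coe.mp h₁)
    have hc₂ := haprop i₂ (Finset.mem_coe.mp h₂)
    have hcell : (T.symm (π i₁)) = (T.symm (π i₂)) := by
      apply Subtype.ext
      apply Prod.ext
      · exact hgeq
      · exact hc₁.trans hc₂.symm
    have := congrArg T hcell
    rw [Equiv.apply_symm_apply, Equiv.apply_symm_apply] at this
    exact π.injective this
  have hinjB : Set.InjOn g (garnirB T b t) := by
    intro i₁ h₁ i₂ h₂ hgeq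
    have hc₁ := hbprop i₁ (Finset.mem_coe.mp h₁)
    have hc₂ := hbprop i₂ (Finset.mem_coe.mp h₂)
    have hcell : (T.symm (π i₁)) = (T.symm (π i₂)) := by
      apply Subtype.ext
      apply Prod.ext
      · exact hgeq
      · exact hc₁.trans hc₂.symm
    have := congrArg T hcell
    rw [Equiv.apply_symm_apply, Equiv.apply_symm_apply] at this
    exact π.injective this
  set RA := (garnirA T a t).image g with hRAdef
  set RB := (garnirB T b t).image g with hRBdef
  -- cardinality of A
  have cardFA : ((Finset.univ : Finset (Cell lam)).filter
      fun cel => cellCol cel = a ∧ t ≤ cellRow cel).card = lam.colLen a - t := by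
    rw [← Nat.card_Ico t (lam.colLen a)]
    apply Finset.card_bij (fun cel _ => cellRow cel)
    · intro cel hcel
      rw [Finset.mem_filter] at hcel
      obtain ⟨-, hcol, hrow⟩ := hcel
      rw [Finset.mem_Ico]
      refine ⟨hrow, ?_⟩
      have := cel.2
      rw [lam.mem_cells] at this
      have h2 : (cellRow cel, cellCol cel) ∈ lam := by
        convert this using 1
        rfl
      rw [YoungDiagram.mem_iff_lt_colLen, hcol] at h2
      exact h2
    · intro c₁ hc₁ c₂ hc₂ heq
      rw [Finset.mem_filter] at hc₁ hc₂
      apply Subtype.ext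
      apply Prod.ext
      · exact heq
      · rw [show c₁.1.2 = cellCol c₁ from rfl, show c₂.1.2 = cellCol c₂ from rfl,
          hc₁.2.1, hc₂.2.1]
    · intro r hr
      rw [Finset.mem_Ico] at hr
      have hmem : (r, a) ∈ lam.cells :=
        (lam.mem_cells _).mpr (YoungDiagram.mem_iff_lt_colLen.mpr hr.2)
      refine ⟨⟨(r, a), hmem⟩, ?_, rfl⟩
      rw [Finset.mem_filter]
      exact ⟨Finset.mem_univ _, rfl, hr.1⟩
  -- cardinality of B
  have cardFB : ((Finset.univ : Finset (Cell lam)).filter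
      fun cel => cellCol cel = b ∧ cellRow cel ≤ t).card = t + 1 := by
    rw [← Finset.card_range (t + 1)]
    apply Finset.card_bij (fun cel _ => cellRow cel)
    · intro cel hcel
      rw [Finset.mem_filter] at hcel
      rw [Finset.mem_range]
      omega
    · intro c₁ hc₁ c₂ hc₂ heq
      rw [Finset.mem_filter] at hc₁ hc₂
      apply Subtype.ext
      apply Prod.ext
      · exact heq
      · rw [show c₁.1.2 = cellCol c₁ from rfl, show c₂.1.2 = cellCol c₂ from rfl,
          hc₁.2.1, hc₂.2.1]
    · intro r hr
      rw [Finset.mem_range] at hr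
      have hmem : (r, b) ∈ lam.cells :=
        (lam.mem_cells _).mpr (YoungDiagram.mem_iff_lt_colLen.mpr (by omega))
      refine ⟨⟨(r, b), hmem⟩, ?_, rfl⟩
      rw [Finset.mem_filter]
      refine ⟨Finset.mem_univ _, rfl, ?_⟩
      show r ≤ t
      omega
  have hRA : RA.card = lam.colLen a - t := by
    rw [hRAdef, Finset.card_image_of_injOn hinjA, garnirA,
      Finset.card_image_of_injective _ T.injective, cardFA]
  have hRB : RB.card = t + 1 := by
    rw [hRBdef, Finset.card_image_of_injOn hinjB, garnirB,
      Finset.card_image_of_injective _ T.injective, cardFB]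
  have hsub : RA ∪ RB ⊆ Finset.range (lam.colLen a) := by
    intro x hx
    rw [Finset.mem_union] at hx
    rw [Finset.mem_range]
    rcases hx with hx | hx
    · obtain ⟨i, hi, rfl⟩ := Finset.mem_image.mp hx
      have hc := haprop i hi
      have := (T.symm (π i)).2
      rw [lam.mem_cells] at this
      have h2 : (cellRow (T.symm (π i)), cellCol (T.symm (π i))) ∈ lam := by
        convert this using 1
        rfl
      rw [YoungDiagram.mem_iff_lt_colLen, hc] at h2
      exact h2
    · obtain ⟨j, hj, rfl⟩ := Finset.mem_image.mp hx
      have hc := hbprop j hj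
      have := (T.symm (π j)).2
      rw [lam.mem_cells] at this
      have h2 : (cellRow (T.symm (π j)), cellCol (T.symm (π j))) ∈ lam := by
        convert this using 1
        rfl
      rw [YoungDiagram.mem_iff_lt_colLen, hc] at h2
      exact lt_of_lt_of_le h2 hba
  have hnd : ¬ Disjoint RA RB := by
    intro hdis
    have h1 : (RA ∪ RB).card = RA.card + RB.card := Finset.card_union_of_disjoint hdis
    have h2 : (RA ∪ RB).card ≤ lam.colLen a := by
      calc (RA ∪ RB).card ≤ (Finset.range (lam.colLen a)).card := Finset.card_le_card hsub
        _ = lam.colLen a := Finset.card_range _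
    omega
  obtain ⟨x, hxA, hxB⟩ := Finset.not_disjoint_iff.mp hnd
  obtain ⟨i, hiA, hgi⟩ := Finset.mem_image.mp hxA
  obtain ⟨j, hjB, hgj⟩ := Finset.mem_image.mp hxB
  exact ⟨i, hiA, j, hjB, by rw [show cellRow (T.symm (π i)) = g i from rfl,
    show cellRow (T.symm (π j)) = g j from rfl, hgi, hgj]⟩

set_option maxHeartbeats 1600000 in
lemma garnir_inner_zero (T : Tab lam n) (c d : Cell lam → ℕ) {a b t : ℕ} (hab : a < b)
    (htb : (t, b) ∈ lam.cells) {τ : Equiv.Perm (Fin n)} (hτ : τ ∈ colGroup T) :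
    ∑ ω ∈ garnirGroup T a b t, ((Equiv.Perm.sign ω : ℤ) : ℂ) •
      ∑ σ ∈ rowGroup T, diagAct (ω * (τ * σ)) (tabMonomial T c d) = 0 := by
  classical
  have hτinv : ∀ cel : Cell lam, cellCol (T.symm (τ⁻¹ (T cel))) = cellCol cel :=
    filt_inv T cellCol (mem_colGroup_iff.mp hτ)
  obtain ⟨i, hiA, j, hjB, hrow⟩ := garnir_pigeonhole T hab htb hτinv
  have hij : i ≠ j := by
    obtain ⟨c₁, ⟨hc₁, -⟩, rfl⟩ := mem_garnirA_iff.mp hiA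
    obtain ⟨c₂, ⟨hc₂, -⟩, rfl⟩ := mem_garnirB_iff.mp hjB
    intro h
    have := T.injective h
    rw [this, hc₂] at hc₁
    omega
  set s := Equiv.swap i j with hs
  have hsH : s ∈ garnirGroup T a b t :=
    swap_mem_garnirGroup (Finset.mem_union_left _ hiA) (Finset.mem_union_right _ hjB)
  have hss : s * s = 1 := Equiv.swap_mul_self i j
  have hsgn : Equiv.Perm.sign s = -1 := Equiv.Perm.sign_swap hij
  set ρ : Equiv.Perm (Fin n) := τ⁻¹ * s * τ with hρ
  have hρeq : ρ = Equiv.swap (τ⁻¹ i) (τ⁻¹ j) := by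
    rw [Equiv.swap_apply_apply τ⁻¹ i j, inv_inv, hρ, hs]
  have hρR : ρ ∈ rowGroup T := by
    rw [hρeq]
    have h1 : τ⁻¹ i = T (T.symm (τ⁻¹ i)) := (Equiv.apply_symm_apply T _).symm
    have h2 : τ⁻¹ j = T (T.symm (τ⁻¹ j)) := (Equiv.apply_symm_apply T _).symm
    rw [h1, h2]
    exact swap_mem_rowGroup hrow
  -- the inner sum is invariant under ω ↦ ω * s
  have hQ : ∀ ω : Equiv.Perm (Fin n),
      ∑ σ ∈ rowGroup T, diagAct ((ω * s) * (τ * σ)) (tabMonomial T c d)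
      = ∑ σ ∈ rowGroup T, diagAct (ω * (τ * σ)) (tabMonomial T c d) := by
    intro ω
    refine (Finset.sum_equiv (Equiv.mulLeft ρ) ?_ ?_).symm
    · intro σ
      simp only [Equiv.coe_mulLeft]
      constructor
      · intro h; exact mul_mem_rowGroup hρR h
      · intro h
        have := mul_mem_rowGroup (inv_mem_rowGroup hρR) h
        rwa [inv_mul_cancel_left] at this
    · intro σ _
      simp only [Equiv.coe_mulLeft]
      congr 1
      have : (ω * s) * (τ * (ρ * σ)) = ω * (s * s) * (τ * σ) := by
        rw [hρ]; group
      rw [this, hss, mul_one]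
  set Q : Equiv.Perm (Fin n) → PolyXY n :=
    fun ω => ∑ σ ∈ rowGroup T, diagAct (ω * (τ * σ)) (tabMonomial T c d) with hQdef
  set S : PolyXY n := ∑ ω ∈ garnirGroup T a b t, ((Equiv.Perm.sign ω : ℤ) : ℂ) • Q ω with hSdef
  have hSneg : S = -S := by
    have hmem : ∀ ω : Equiv.Perm (Fin n),
        ω ∈ garnirGroup T a b t ↔ (Equiv.mulRight s) ω ∈ garnirGroup T a b t := by
      intro ω
      simp only [Equiv.coe_mulRight]
      constructor
      · intro h; exact mul_mem_garnirGroup h hsH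
      · intro h
        have := mul_mem_garnirGroup h hsH
        rwa [mul_assoc, hss, mul_one] at this
    have hterm : ∀ ω ∈ garnirGroup T a b t,
        ((Equiv.Perm.sign ω : ℤ) : ℂ) • Q ω
        = -(((Equiv.Perm.sign ((Equiv.mulRight s) ω) : ℤ) : ℂ) • Q ((Equiv.mulRight s) ω)) := by
      intro ω _
      simp only [Equiv.coe_mulRight]
      rw [show Q (ω * s) = Q ω from hQ ω]
      rw [show (Equiv.Perm.sign (ω * s) : ℤ) = -(Equiv.Perm.sign ω : ℤ) by
        rw [Equiv.Perm.sign_mul, hsgn]; simp]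
      push_cast
      rw [neg_smul, neg_neg]
    calc S = ∑ ω ∈ garnirGroup T a b t,
        -(((Equiv.Perm.sign ((Equiv.mulRight s) ω) : ℤ) : ℂ) • Q ((Equiv.mulRight s) ω)) := by
          rw [hSdef]
          exact Finset.sum_congr rfl hterm
      _ = -∑ ω ∈ garnirGroup T a b t,
          ((Equiv.Perm.sign ((Equiv.mulRight s) ω) : ℤ) : ℂ) • Q ((Equiv.mulRight s) ω) := by
          simp only [← Finset.sum_neg_distrib]
      _ = -S := by
          congr 1
          rw [hSdef]
          exact Finset.sum_equiv (Equiv.mulRight s) hmem (fun ω _ => rfl)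
  have h2 : (2 : ℂ) • S = 0 := by
    rw [two_smul]
    nth_rewrite 1 [hSneg]
    simp
  have := smul_eq_zero.mp h2
  rcases this with h | h
  · exact absurd h two_ne_zero
  · exact h

/-- The Garnir element `G^{a,b}_t = Σ_{ω ∈ S^{a,b}_t} sgn(ω)·ω`
annihilates `F_T^{c,d}`.  Here `a < b` are column indices, and `t` is a (`0`-indexed)
row index such that column `b` contains a cell in row `t`. -/
theorem stmt10 (n : ℕ) (hn : 1 ≤ n)
    (lam : YoungDiagram) (hlam : lam.card = n)
    (T : Tab lam n) (c d : Cell lam → ℕ)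
    (a b t : ℕ) (hab : a < b) (htb : (t, b) ∈ lam.cells) :
    ∑ ω ∈ garnirGroup T a b t,
      ((Equiv.Perm.sign ω : ℤ) : ℂ) • diagAct ω (FTcd T c d) = 0 := by
  classical
  have step : ∀ ω : Equiv.Perm (Fin n),
      ((Equiv.Perm.sign ω : ℤ) : ℂ) • diagAct ω (FTcd T c d)
      = ∑ τ ∈ colGroup T, ((Equiv.Perm.sign τ : ℤ) : ℂ) •
          (((Equiv.Perm.sign ω : ℤ) : ℂ) •
            ∑ σ ∈ rowGroup T, diagAct (ω * (τ * σ)) (tabMonomial T c d)) := by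
    intro ω
    unfold FTcd
    simp only [diagAct_sum, diagAct_smul, ← diagAct_mul, Finset.smul_sum]
    exact Finset.sum_congr rfl fun τ _ => Finset.sum_congr rfl fun σ _ => smul_comm _ _ _
  calc ∑ ω ∈ garnirGroup T a b t, ((Equiv.Perm.sign ω : ℤ) : ℂ) • diagAct ω (FTcd T c d)
      = ∑ ω ∈ garnirGroup T a b t, ∑ τ ∈ colGroup T, ((Equiv.Perm.sign τ : ℤ) : ℂ) •
          (((Equiv.Perm.sign ω : ℤ) : ℂ) •
            ∑ σ ∈ rowGroup T, diagAct (ω * (τ * σ)) (tabMonomial T c d)) :=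
        Finset.sum_congr rfl fun ω _ => step ω
    _ = ∑ τ ∈ colGroup T, ∑ ω ∈ garnirGroup T a b t, ((Equiv.Perm.sign τ : ℤ) : ℂ) •
          (((Equiv.Perm.sign ω : ℤ) : ℂ) •
            ∑ σ ∈ rowGroup T, diagAct (ω * (τ * σ)) (tabMonomial T c d)) := Finset.sum_comm
    _ = 0 := by
        apply Finset.sum_eq_zero
        intro τ hτ
        rw [← Finset.smul_sum, garnir_inner_zero T c d hab htb hτ, smul_zero]
end Aux
end
end
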